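/- arXiv:0910.5543 — 3 statements merged into one kernel-verified Lean document; each statement's English description precedes it below -/
import Mathlib

section
/- The least map is injective on exponentials: for any finite point set V in ℝ^n, the restriction map from Π(V) to functions on V, f ↦ f|_V, is a linear isomorphism between Π(V) and ℂ^V; in particular dim Π(V) = #V. -/
open MvPolynomial

attribute [local instance] Classical.propDecidable

noncomputable section

/-- The linear polynomial `t ↦ v ⬝ t` attached to a vector `v ∈ ℝⁿ`. -/
def lin (n : ℕ) (v : Fin n → ℝ) : MvPolynomial (Fin n) ℂ :=
  ∑ i, MvPolynomial.C (v i : ℂ) * MvPolynomial.X i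

/-- `p_Y`, the product of the linear polynomials over an index set `Y`. -/
def pProd {n : ℕ} {ι : Type*} (x : ι → Fin n → ℝ) (Y : Finset ι) : MvPolynomial (Fin n) ℂ :=
  ∏ i ∈ Y, lin n (x i)

/-- The differential operator `p(D)` (substitute `∂/∂tᵢ` for `tᵢ` in `p`). -/
def pDop {n : ℕ} (p : MvPolynomial (Fin n) ℂ) : Module.End ℂ (MvPolynomial (Fin n) ℂ) :=
  (AddMonoidAlgebra.coeff p).sum fun m c =>
    c • (((List.finRange n).map fun i =>
      ((MvPolynomial.pderiv i).toLinearMap : Module.End ℂ (MvPolynomial (Fin n) ℂ)) ^ m i).prod)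

/-- The kernel of a polynomial ideal: all `q` with `p(D)q = 0` for every `p ∈ I`. -/
def dKer {n : ℕ} (I : Ideal (MvPolynomial (Fin n) ℂ)) : Submodule ℂ (MvPolynomial (Fin n) ℂ) :=
  ⨅ p ∈ I, LinearMap.ker (pDop p)

/-- Standard inner product on `ℝⁿ`. -/
def dotp {n : ℕ} (u v : Fin n → ℝ) : ℝ := ∑ i, u i * v i

/-- `B` is a basis drawn from the multiset `x`. -/
def IsBasisSet {n : ℕ} {ι : Type*} (x : ι → Fin n → ℝ) (B : Finset ι) : Prop :=
  LinearIndependent ℝ (fun b : {i // i ∈ B} => x b.1) ∧ Submodule.span ℝ (x '' ↑B) = ⊤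

/-- `I` is an independent subset of the multiset `x`. -/
def IsIndepSet {n : ℕ} {ι : Type*} (x : ι → Fin n → ℝ) (I : Finset ι) : Prop :=
  LinearIndependent ℝ (fun b : {i // i ∈ I} => x b.1)

/-- `F` is a facet hyperplane of `X`. -/
def IsFacet {n : ℕ} {ι : Type*} (x : ι → Fin n → ℝ) (F : Submodule ℝ (Fin n → ℝ)) : Prop :=
  Module.finrank ℝ F = n - 1 ∧ ∃ Y : Finset ι, Submodule.span ℝ (x '' ↑Y) = F

/-- `η` is a (nonzero) normal to the subspace `F`. -/
def IsNormal {n : ℕ} (η : Fin n → ℝ) (F : Submodule ℝ (Fin n → ℝ)) : Prop :=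
  η ≠ 0 ∧ ∀ v ∈ F, dotp η v = 0

/-- `m(F)`: number of elements of `X` outside a subspace `F`. -/
def mult {n : ℕ} {ι : Type*} [Fintype ι] (x : ι → Fin n → ℝ) (F : Submodule ℝ (Fin n → ℝ)) : ℕ :=
  (Finset.univ.filter fun i => x i ∉ F).card

/-- The central ideal `I(X)`. -/
def centralIdeal {n : ℕ} {ι : Type*} [Fintype ι] (x : ι → Fin n → ℝ) :
    Ideal (MvPolynomial (Fin n) ℂ) :=
  Ideal.span {p | ∃ F η, IsFacet x F ∧ IsNormal η F ∧ p = lin n η ^ mult x F}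

/-- The central `P`-space of the sub-multiset indexed by `A`. -/
def centralPOn {n : ℕ} {ι : Type*} [Fintype ι] [DecidableEq ι] (x : ι → Fin n → ℝ)
    (A : Finset ι) : Submodule ℂ (MvPolynomial (Fin n) ℂ) :=
  Submodule.span ℂ
    {p | ∃ Y : Finset ι, Y ⊆ A ∧
      Module.finrank ℝ (Submodule.span ℝ (x '' ↑(A \ Y))) = n ∧ p = pProd x Y}

/-- `X(Y)` with respect to the order on indices. -/
def XofY {n N : ℕ} (x : Fin N → Fin n → ℝ) (Y : Finset (Fin N)) : Finset (Fin N) :=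
  Finset.univ.filter fun i => i ∉ Y ∧ x i ∉ Submodule.span ℝ (x '' {j | j ∈ Y ∧ j < i})

/-- the valuation `val(Y) = #X(Y)`. -/
def valu {n N : ℕ} (x : Fin N → Fin n → ℝ) (Y : Finset (Fin N)) : ℕ := (XofY x Y).card

/-- `Q_Y := p_{X(Y)}`. -/
def QB {n N : ℕ} (x : Fin N → Fin n → ℝ) (Y : Finset (Fin N)) : MvPolynomial (Fin n) ℂ :=
  pProd x (XofY x Y)

/-- A semi-external collection of independent sets. -/
def SemiExternal {n N : ℕ} (x : Fin N → Fin n → ℝ) (I' : Set (Finset (Fin N))) : Prop :=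
  (∀ I ∈ I', IsIndepSet x I) ∧
  ∀ I ∈ I', ∀ J : Finset (Fin N), IsIndepSet x J →
    Submodule.span ℝ (x '' ↑I) ≤ Submodule.span ℝ (x '' ↑J) → J ∈ I'

/-- `P₊(X, 𝕀')`. -/
def PplusOn {n N : ℕ} (x : Fin N → Fin n → ℝ) (I' : Set (Finset (Fin N))) :
    Submodule ℂ (MvPolynomial (Fin n) ℂ) :=
  Submodule.span ℂ {p | ∃ Y : Finset (Fin N), (∃ I ∈ I', Y ∩ I = ∅) ∧ p = pProd x Y}

/-- `Π⁰_j(S^⊥)`: homogeneous polynomials of degree `j` annihilated by directional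
derivatives along `S`. -/
def homPerp (n j : ℕ) (S : Submodule ℝ (Fin n → ℝ)) : Set (MvPolynomial (Fin n) ℂ) :=
  {p | p ∈ MvPolynomial.homogeneousSubmodule (Fin n) ℂ j ∧ ∀ η ∈ S, pDop (lin n η) p = 0}

/-- `Π⁰_j(W)`: homogeneous polynomials of degree `j` which are functions on `W`
(annihilated by derivatives along `W^⊥`). -/
def homOn (n j : ℕ) (W : Submodule ℝ (Fin n → ℝ)) : Set (MvPolynomial (Fin n) ℂ) :=
  {p | p ∈ MvPolynomial.homogeneousSubmodule (Fin n) ℂ j ∧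
    ∀ η : Fin n → ℝ, (∀ w ∈ W, dotp η w = 0) → pDop (lin n η) p = 0}

/-- `S(X,𝕀')`: spans of independent sets outside `𝕀'`. -/
def exSpans {n N : ℕ} (x : Fin N → Fin n → ℝ) (I' : Set (Finset (Fin N))) :
    Set (Submodule ℝ (Fin n → ℝ)) :=
  {S | ∃ I : Finset (Fin N), IsIndepSet x I ∧ I ∉ I' ∧ Submodule.span ℝ (x '' ↑I) = S}

/-- The external ideal `I₊(X)`. -/
def IplusIdeal {n : ℕ} {ι : Type*} [Fintype ι] (x : ι → Fin n → ℝ) :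
    Ideal (MvPolynomial (Fin n) ℂ) :=
  Ideal.span {p | ∃ F η, IsFacet x F ∧ IsNormal η F ∧ p = lin n η ^ (mult x F + 1)}

/-- The semi-external ideal `I₊(X,𝕀')`. -/
def IplusOn {n N : ℕ} (x : Fin N → Fin n → ℝ) (I' : Set (Finset (Fin N))) :
    Ideal (MvPolynomial (Fin n) ℂ) :=
  IplusIdeal x ⊔ Ideal.span {p | ∃ S ∈ exSpans x I', p ∈ homPerp n (mult x S) S}

/-- `expPart V c j`: the degree-`j` homogeneous part of `∑_{v ∈ V} c_v e_v`. -/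
def expPart (n : ℕ) (V : Finset (Fin n → ℝ)) (c : (Fin n → ℝ) → ℂ) (j : ℕ) :
    MvPolynomial (Fin n) ℂ :=
  ((j.factorial : ℂ))⁻¹ • ∑ v ∈ V, c v • (lin n v) ^ j

/-- The least space `Π(V)` of a finite point set `V`. -/
def leastSpace (n : ℕ) (V : Finset (Fin n → ℝ)) : Submodule ℂ (MvPolynomial (Fin n) ℂ) :=
  Submodule.span ℂ
    {p | ∃ (c : (Fin n → ℝ) → ℂ) (j₀ : ℕ),
      p = expPart n V c j₀ ∧ p ≠ 0 ∧ ∀ j < j₀, expPart n V c j = 0}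

/-- Simplicity of the arrangement `H(X,λ)`. -/
def SimpleArrangement {n N : ℕ} (x : Fin N → Fin n → ℝ) (lam : Fin N → ℝ) : Prop :=
  ∀ Y : Finset (Fin N), (∃ t : Fin n → ℝ, ∀ i ∈ Y, dotp (x i) t = lam i) →
    LinearIndependent ℝ (fun i : {i // i ∈ Y} => x i.1)

/-- `b` is `I`-internally active in `B`. -/
def IActive {n N : ℕ} (x : Fin N → Fin n → ℝ) (Iset B : Finset (Fin N)) (b : Fin N) : Prop :=
  b ∈ B ∧ b ∈ Iset ∧ ∀ j, x j ∉ Submodule.span ℝ (x '' ↑(B.erase b)) → j ≤ b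

/-- `B` is an `I`-internal basis. -/
def IInternal {n N : ℕ} (x : Fin N → Fin n → ℝ) (Iset B : Finset (Fin N)) : Prop :=
  IsBasisSet x B ∧ ∀ b, ¬ IActive x Iset B b

/-- The semi-internal space `P₋(X,I)`. -/
def Pminus {n N : ℕ} (x : Fin N → Fin n → ℝ) (Iset : Finset (Fin N)) :
    Submodule ℂ (MvPolynomial (Fin n) ℂ) :=
  ⨅ b ∈ Iset, centralPOn x (Finset.univ.erase b)

/-- The semi-internal ideal `I₋(X,I)`. -/
def IminusOn {n N : ℕ} (x : Fin N → Fin n → ℝ) (Iset : Finset (Fin N)) :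
    Ideal (MvPolynomial (Fin n) ℂ) :=
  centralIdeal x ⊔
    Ideal.span {p | ∃ F η, IsFacet x F ∧ IsNormal η F ∧ ¬ (x '' ↑Iset ⊆ ↑F) ∧
      p = lin n η ^ (mult x F - 1)}

/-- The semi-internal ideal `J₋(X,I)` of `I`-long polynomials. -/
def JminusOn {n N : ℕ} (x : Fin N → Fin n → ℝ) (Iset : Finset (Fin N)) :
    Ideal (MvPolynomial (Fin n) ℂ) :=
  Ideal.span {p | ∃ Y : Finset (Fin N),
    (∀ B, IInternal x Iset B → (Y ∩ B).Nonempty) ∧ p = pProd x Y}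

/-- Greedy completion `ex(I)` of an independent set by the auxiliary ordered basis `b0`. -/
def exComp {n N : ℕ} (x : Fin N → Fin n → ℝ) (b0 : Fin n → Fin n → ℝ) (I : Finset (Fin N)) :
    Finset (Fin N ⊕ Fin n) :=
  I.image Sum.inl ∪
    (Finset.univ.filter fun k : Fin n =>
      b0 k ∉ Submodule.span ℝ (x '' ↑I ∪ b0 '' {j | j < k})).image Sum.inr

namespace LeastMapAux
open MvPolynomial Finset Complex

variable {n : ℕ}

/-- complexification of a real point -/
def cpx (v : Fin n → ℝ) : Fin n → ℂ := fun i => (v i : ℂ)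

/-- product of factorials of a multi-index -/
def wfac (m : Fin n →₀ ℕ) : ℕ := ∏ i, (m i).factorial

/-- the apolarity pairing -/
noncomputable def apol (p q : MvPolynomial (Fin n) ℂ) : ℂ :=
  ∑ m ∈ q.support, coeff m p * coeff m q * (wfac m : ℂ)

lemma apol_eq_sum_subset {p q : MvPolynomial (Fin n) ℂ} {s : Finset (Fin n →₀ ℕ)}
    (h : q.support ⊆ s) :
    apol p q = ∑ m ∈ s, coeff m p * coeff m q * (wfac m : ℂ) := by
  refine Finset.sum_subset h ?_
  intro m _ hm
  rw [MvPolynomial.notMem_support_iff.mp hm]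
  ring

@[simp] lemma apol_zero_right (p : MvPolynomial (Fin n) ℂ) : apol p 0 = 0 := by
  simp [apol]

@[simp] lemma apol_zero_left (q : MvPolynomial (Fin n) ℂ) : apol 0 q = 0 := by
  simp [apol]

lemma apol_add_right (p q q' : MvPolynomial (Fin n) ℂ) :
    apol p (q + q') = apol p q + apol p q' := by
  rw [apol_eq_sum_subset (s := q.support ∪ q'.support) (MvPolynomial.support_add),
    apol_eq_sum_subset (s := q.support ∪ q'.support) Finset.subset_union_left,
    apol_eq_sum_subset (s := q.support ∪ q'.support) Finset.subset_union_right,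
    ← Finset.sum_add_distrib]
  refine Finset.sum_congr rfl fun m _ => ?_
  rw [MvPolynomial.coeff_add]
  ring

lemma apol_smul_right (p : MvPolynomial (Fin n) ℂ) (a : ℂ) (q : MvPolynomial (Fin n) ℂ) :
    apol p (a • q) = a * apol p q := by
  rw [apol_eq_sum_subset (s := q.support) (MvPolynomial.support_smul), apol, Finset.mul_sum]
  refine Finset.sum_congr rfl fun m _ => ?_
  rw [MvPolynomial.coeff_smul]
  simp only [smul_eq_mul]
  ring

/-- `apol p` as an additive monoid hom, to get `map_sum`. -/
noncomputable def apolHom (p : MvPolynomial (Fin n) ℂ) : MvPolynomial (Fin n) ℂ →+ ℂ where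
  toFun := apol p
  map_zero' := apol_zero_right p
  map_add' := apol_add_right p

lemma apol_sum_right {ι : Type*} (p : MvPolynomial (Fin n) ℂ) (s : Finset ι)
    (f : ι → MvPolynomial (Fin n) ℂ) :
    apol p (∑ i ∈ s, f i) = ∑ i ∈ s, apol p (f i) :=
  map_sum (apolHom p) f s

lemma apol_monomial_right (p : MvPolynomial (Fin n) ℂ) (k : Fin n →₀ ℕ) (a : ℂ) :
    apol p (monomial k a) = coeff k p * a * (wfac k : ℂ) := by
  by_cases ha : a = 0
  · simp [ha]
  · rw [apol, MvPolynomial.support_monomial, if_neg ha, Finset.sum_singleton,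
      MvPolynomial.coeff_monomial, if_pos rfl]

end LeastMapAux
namespace LeastMapAux
open MvPolynomial Finset Complex

variable {n : ℕ}

lemma lin_isHomogeneous (v : Fin n → ℝ) : (lin n v).IsHomogeneous 1 :=
  MvPolynomial.IsHomogeneous.sum _ _ _ fun i _ => MvPolynomial.isHomogeneous_C_mul_X _ i

lemma lin_pow_isHomogeneous (v : Fin n → ℝ) (j : ℕ) : ((lin n v) ^ j).IsHomogeneous j := by
  simpa using (lin_isHomogeneous v).pow j

lemma lin_pow_eq_sum (v : Fin n → ℝ) (j : ℕ) :
    (lin n v) ^ j = ∑ k ∈ Finset.piAntidiag (univ : Finset (Fin n)) j,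
      monomial (Finsupp.equivFunOnFinite.symm k)
        ((Nat.multinomial univ k : ℂ) * ∏ i, (v i : ℂ) ^ k i) := by
  rw [lin, Finset.sum_pow_eq_sum_piAntidiag]
  refine Finset.sum_congr rfl fun k _ => ?_
  have h1 : ∏ i, (MvPolynomial.C ((v i : ℝ) : ℂ) * X i) ^ k i
      = monomial (Finsupp.equivFunOnFinite.symm k) (∏ i, ((v i : ℝ) : ℂ) ^ k i) := by
    simp_rw [mul_pow, ← MvPolynomial.C_pow, Finset.prod_mul_distrib, ← map_prod]
    rw [MvPolynomial.monomial_eq]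
    congr 1
    rw [Finsupp.prod]
    refine (Finset.prod_subset (Finset.subset_univ _) fun i _ hi => ?_).symm
    have : (Finsupp.equivFunOnFinite.symm k) i = 0 := by
      simpa [Finsupp.mem_support_iff] using hi
    simp only [Finsupp.coe_equivFunOnFinite_symm] at this ⊢
    rw [this, pow_zero]
  rw [h1]
  rw [← MvPolynomial.C_eq_coe_nat, MvPolynomial.C_mul_monomial]

lemma apol_lin_pow {p : MvPolynomial (Fin n) ℂ} {j : ℕ} (hp : p.IsHomogeneous j)
    (v : Fin n → ℝ) :
    apol p ((lin n v) ^ j) = (j.factorial : ℂ) * eval (cpx v) p := by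
  rw [lin_pow_eq_sum, apol_sum_right]
  have hterm : ∀ k ∈ Finset.piAntidiag (univ : Finset (Fin n)) j,
      apol p (monomial (Finsupp.equivFunOnFinite.symm k)
        ((Nat.multinomial univ k : ℂ) * ∏ i, (v i : ℂ) ^ k i))
      = (j.factorial : ℂ) *
          (coeff (Finsupp.equivFunOnFinite.symm k) p * ∏ i, (v i : ℂ) ^ k i) := by
    intro k hk
    rw [apol_monomial_right]
    have hfac : (wfac (Finsupp.equivFunOnFinite.symm k) : ℂ) * (Nat.multinomial univ k : ℂ)
        = (j.factorial : ℂ) := by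
      rw [← Nat.cast_mul]
      norm_cast
      have := Nat.multinomial_spec (univ : Finset (Fin n)) k
      rw [Finset.mem_piAntidiag] at hk
      rw [wfac]
      simp only [Finsupp.coe_equivFunOnFinite_symm]
      rw [this, hk.1]
    calc coeff (Finsupp.equivFunOnFinite.symm k) p *
          ((Nat.multinomial univ k : ℂ) * ∏ i, (v i : ℂ) ^ k i) *
          (wfac (Finsupp.equivFunOnFinite.symm k) : ℂ)
        = (wfac (Finsupp.equivFunOnFinite.symm k) : ℂ) * (Nat.multinomial univ k : ℂ) *
          (coeff (Finsupp.equivFunOnFinite.symm k) p * ∏ i, (v i : ℂ) ^ k i) := by ring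
      _ = _ := by rw [hfac]
  rw [Finset.sum_congr rfl hterm, ← Finset.mul_sum]
  congr 1
  -- now: ∑ over piAntidiag = eval
  rw [MvPolynomial.eval_eq']
  have himg : ∀ k ∈ Finset.piAntidiag (univ : Finset (Fin n)) j,
      coeff (Finsupp.equivFunOnFinite.symm k) p * ∏ i, (v i : ℂ) ^ k i
      = coeff (Finsupp.equivFunOnFinite.symm k) p *
          ∏ i, (cpx v) i ^ (Finsupp.equivFunOnFinite.symm k) i := by
    intro k _
    simp [cpx]
  rw [Finset.sum_congr rfl himg]
  have e1 : ∑ m ∈ (Finset.piAntidiag (univ : Finset (Fin n)) j).image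
        (fun k => Finsupp.equivFunOnFinite.symm k),
        (coeff m p * ∏ i, (cpx v) i ^ m i)
      = ∑ x ∈ Finset.piAntidiag (univ : Finset (Fin n)) j,
        (coeff (Finsupp.equivFunOnFinite.symm x) p *
          ∏ i, (cpx v) i ^ (Finsupp.equivFunOnFinite.symm x) i) :=
    Finset.sum_image (fun a _ b _ h => Finsupp.equivFunOnFinite.symm.injective h)
  rw [← e1]
  refine (Finset.sum_subset ?_ ?_).symm
  · intro m hm
    rw [Finset.mem_image]
    refine ⟨Finsupp.equivFunOnFinite m, ?_, Equiv.symm_apply_apply _ _⟩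
    rw [Finset.mem_piAntidiag]
    constructor
    · have hw : (Finsupp.weight 1) m = j := hp (MvPolynomial.mem_support_iff.mp hm)
      rw [← hw, Finsupp.weight_apply, Finsupp.sum]
      simp only [Finsupp.equivFunOnFinite_apply, Pi.one_apply, smul_eq_mul, mul_one]
      exact (Finset.sum_subset (Finset.subset_univ _) fun i _ hi => by
        simpa [Finsupp.mem_support_iff] using hi).symm
    · intro i _; exact Finset.mem_univ i
  · intro m _ hm
    rw [MvPolynomial.notMem_support_iff.mp hm, zero_mul]

end LeastMapAux
namespace LeastMapAux
open MvPolynomial Finset Complex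

variable {n : ℕ}

/-- degree-`j` exponential part, as a linear map on functions on `V`. -/
noncomputable def EE (V : Finset (Fin n → ℝ)) (j : ℕ) :
    ({v // v ∈ V} → ℂ) →ₗ[ℂ] MvPolynomial (Fin n) ℂ where
  toFun c := ((j.factorial : ℂ))⁻¹ • ∑ v : {v // v ∈ V}, c v • (lin n v.1) ^ j
  map_add' a b := by
    simp only [Pi.add_apply, add_smul, Finset.sum_add_distrib, smul_add]
  map_smul' a c := by
    simp only [Pi.smul_apply, smul_eq_mul, RingHom.id_apply, ← smul_smul, Finset.smul_sum]
    refine Finset.sum_congr rfl fun v _ => ?_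
    rw [smul_comm]

lemma expPart_eq_EE (V : Finset (Fin n → ℝ)) (c : (Fin n → ℝ) → ℂ) (j : ℕ) :
    expPart n V c j = EE V j (fun v => c v.1) := by
  rw [expPart, EE]
  simp only [LinearMap.coe_mk, AddHom.coe_mk]
  congr 1
  rw [← Finset.sum_attach V (fun v => c v • (lin n v) ^ j)]
  rw [Finset.univ_eq_attach]

lemma EE_isHomogeneous (V : Finset (Fin n → ℝ)) (j : ℕ) (c : {v // v ∈ V} → ℂ) :
    (EE V j c).IsHomogeneous j := by
  rw [← MvPolynomial.mem_homogeneousSubmodule]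
  refine Submodule.smul_mem _ _ (Submodule.sum_mem _ fun v _ => Submodule.smul_mem _ _ ?_)
  rw [MvPolynomial.mem_homogeneousSubmodule]
  exact lin_pow_isHomogeneous _ j

/-- the subspace of data whose exponential parts vanish below degree `j` -/
noncomputable def KK (V : Finset (Fin n → ℝ)) (j : ℕ) : Submodule ℂ ({v // v ∈ V} → ℂ) :=
  ⨅ i ∈ Finset.range j, LinearMap.ker (EE V i)

lemma mem_KK_iff {V : Finset (Fin n → ℝ)} {j : ℕ} {c : {v // v ∈ V} → ℂ} :
    c ∈ KK V j ↔ ∀ i < j, EE V i c = 0 := by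
  simp [KK, Submodule.mem_iInf, LinearMap.mem_ker, Finset.mem_range]

lemma apol_EE {V : Finset (Fin n → ℝ)} {p : MvPolynomial (Fin n) ℂ} {j : ℕ}
    (hp : p.IsHomogeneous j) (c : {v // v ∈ V} → ℂ) :
    apol p (EE V j c) = ∑ v : {v // v ∈ V}, c v * eval (cpx v.1) p := by
  rw [EE]
  simp only [LinearMap.coe_mk, AddHom.coe_mk]
  rw [apol_smul_right, apol_sum_right]
  have : ∀ v : {v // v ∈ V}, apol p (c v • (lin n v.1) ^ j)
      = c v * ((j.factorial : ℂ) * eval (cpx v.1) p) := by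
    intro v
    rw [apol_smul_right, apol_lin_pow hp]
  rw [Finset.sum_congr rfl fun v _ => this v]
  have hfac : ((j.factorial : ℂ)) ≠ 0 := by
    exact_mod_cast Nat.factorial_ne_zero j
  rw [Finset.mul_sum]
  refine Finset.sum_congr rfl fun v _ => ?_
  field_simp

lemma sum_eval_eq {V : Finset (Fin n → ℝ)} (p : MvPolynomial (Fin n) ℂ)
    (c : {v // v ∈ V} → ℂ) :
    ∑ v : {v // v ∈ V}, c v * eval (cpx v.1) p
      = ∑ j ∈ Finset.range (p.totalDegree + 1),
          apol (homogeneousComponent j p) (EE V j c) := by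
  have hcomp : ∀ j, apol (homogeneousComponent j p) (EE V j c)
      = ∑ v : {v // v ∈ V}, c v * eval (cpx v.1) (homogeneousComponent j p) :=
    fun j => apol_EE (homogeneousComponent_isHomogeneous j p) c
  rw [Finset.sum_congr rfl fun j _ => hcomp j, Finset.sum_comm]
  refine Finset.sum_congr rfl fun v _ => ?_
  rw [← Finset.mul_sum]
  congr 1
  rw [← map_sum, MvPolynomial.sum_homogeneousComponent]

end LeastMapAux
namespace LeastMapAux
open MvPolynomial Finset Complex

variable {n : ℕ}

lemma map_conj_lin (v : Fin n → ℝ) :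
    MvPolynomial.map (starRingEnd ℂ) (lin n v) = lin n v := by
  rw [lin, map_sum]
  refine Finset.sum_congr rfl fun i _ => ?_
  rw [map_mul, MvPolynomial.map_C, MvPolynomial.map_X, Complex.conj_ofReal]

lemma EE_conj (V : Finset (Fin n → ℝ)) (j : ℕ) (c : {v // v ∈ V} → ℂ) :
    EE V j (fun v => (starRingEnd ℂ) (c v))
      = MvPolynomial.map (starRingEnd ℂ) (EE V j c) := by
  rw [EE]
  simp only [LinearMap.coe_mk, AddHom.coe_mk]
  rw [smul_eq_C_mul, smul_eq_C_mul, map_mul, MvPolynomial.map_C, map_sum]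
  congr 1
  · congr 1
    rw [map_inv₀, map_natCast]
  · refine Finset.sum_congr rfl fun v _ => ?_
    rw [smul_eq_C_mul, smul_eq_C_mul, map_mul, MvPolynomial.map_C, map_pow, map_conj_lin]

lemma map_conj_map_conj (p : MvPolynomial (Fin n) ℂ) :
    MvPolynomial.map (starRingEnd ℂ) (MvPolynomial.map (starRingEnd ℂ) p) = p := by
  rw [MvPolynomial.map_map]
  have h : (starRingEnd ℂ).comp (starRingEnd ℂ) = RingHom.id ℂ := by
    ext z; exact Complex.conj_conj z
  rw [h, MvPolynomial.map_id]

lemma map_conj_ne_zero {p : MvPolynomial (Fin n) ℂ} (h : p ≠ 0) :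
    MvPolynomial.map (starRingEnd ℂ) p ≠ 0 := by
  intro h0
  exact h (MvPolynomial.map_injective _ (starRingEnd ℂ).injective (by simpa using h0))

/-- positivity of the hermitian pairing -/
lemma eq_zero_of_apol_conj {q : MvPolynomial (Fin n) ℂ}
    (h : apol (MvPolynomial.map (starRingEnd ℂ) q) q = 0) : q = 0 := by
  have hterm : ∀ m ∈ q.support,
      coeff m (MvPolynomial.map (starRingEnd ℂ) q) * coeff m q * (wfac m : ℂ)
        = ((Complex.normSq (coeff m q) * (wfac m : ℝ) : ℝ) : ℂ) := by
    intro m _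
    rw [MvPolynomial.coeff_map]
    rw [mul_comm ((starRingEnd ℂ) (coeff m q)) (coeff m q), Complex.mul_conj]
    push_cast
    ring
  rw [apol, Finset.sum_congr rfl hterm, ← Complex.ofReal_sum] at h
  have hr : ∑ m ∈ q.support, Complex.normSq (coeff m q) * (wfac m : ℝ) = 0 := by
    exact_mod_cast h
  by_contra hq
  obtain ⟨m, hm⟩ := MvPolynomial.support_nonempty.mpr hq
  have hnonneg : ∀ m ∈ q.support, 0 ≤ Complex.normSq (coeff m q) * (wfac m : ℝ) :=
    fun m _ => mul_nonneg (Complex.normSq_nonneg _) (Nat.cast_nonneg _)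
  have := (Finset.sum_eq_zero_iff_of_nonneg hnonneg).mp hr m hm
  have hw : (0:ℝ) < (wfac m : ℝ) := by
    have : 0 < wfac m := Finset.prod_pos fun i _ => Nat.factorial_pos _
    exact_mod_cast this
  have hcoeff : coeff m q ≠ 0 := MvPolynomial.mem_support_iff.mp hm
  have : Complex.normSq (coeff m q) = 0 := by
    rcases mul_eq_zero.mp this with h' | h'
    · exact h'
    · exact absurd h' hw.ne'
  exact hcoeff (Complex.normSq_eq_zero.mp this)

/-- orthogonality of different homogeneous degrees -/
lemma apol_eq_zero_of_ne {p q : MvPolynomial (Fin n) ℂ} {d e : ℕ}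
    (hp : p.IsHomogeneous d) (hq : q.IsHomogeneous e) (hde : d ≠ e) : apol p q = 0 := by
  refine Finset.sum_eq_zero fun m hm => ?_
  have hmd : m.degree = e := by
    rw [Finsupp.degree_eq_weight_one]
    exact hq (MvPolynomial.mem_support_iff.mp hm)
  rw [hp.coeff_eq_zero (by rw [hmd]; exact fun h => hde h.symm)]
  ring

end LeastMapAux
namespace LeastMapAux
open MvPolynomial Finset Complex

variable {n : ℕ}

/-- real version of `lin` -/
noncomputable def linR (u : Fin n → ℝ) : MvPolynomial (Fin n) ℝ :=
  ∑ i, MvPolynomial.C (u i) * MvPolynomial.X i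

lemma eval_linR (t u : Fin n → ℝ) : eval t (linR u) = dotp u t := by
  rw [linR, map_sum, dotp]
  refine Finset.sum_congr rfl fun i _ => ?_
  rw [map_mul, eval_C, eval_X]

lemma linR_ne_zero {u : Fin n → ℝ} (hu : u ≠ 0) : linR u ≠ 0 := by
  obtain ⟨i, hi⟩ := Function.ne_iff.mp hu
  intro h0
  have : coeff (Finsupp.single i 1) (linR u) = u i := by
    rw [linR, MvPolynomial.coeff_sum]
    rw [Finset.sum_eq_single i]
    · rw [MvPolynomial.coeff_C_mul, MvPolynomial.coeff_X, if_pos rfl, mul_one]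
    · intro b _ hb
      rw [MvPolynomial.coeff_C_mul, MvPolynomial.coeff_X', if_neg, mul_zero]
      intro hsingle
      exact hb (by
        have := Finsupp.single_left_injective (α := Fin n) (one_ne_zero (α := ℕ))
        exact this hsingle)
    · intro h; exact absurd (Finset.mem_univ i) h
  rw [h0, MvPolynomial.coeff_zero] at this
  exact hi this.symm

/-- a generic point separating the points of `V` -/
lemma exists_separating (V : Finset (Fin n → ℝ)) :
    ∃ t : Fin n → ℝ, Function.Injective fun v : {v // v ∈ V} => dotp v.1 t := by
  classical
  set S := (V ×ˢ V).filter (fun p => p.1 ≠ p.2) with hS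
  set P : MvPolynomial (Fin n) ℝ := ∏ p ∈ S, linR (p.1 - p.2) with hP
  have hPne : P ≠ 0 := by
    rw [hP, Finset.prod_ne_zero_iff]
    intro p hp
    refine linR_ne_zero (sub_ne_zero.mpr ?_)
    exact (Finset.mem_filter.mp hp).2
  have : ∃ t, eval t P ≠ 0 := by
    by_contra hno
    push_neg at hno
    exact hPne (MvPolynomial.funext fun t => by rw [hno t, map_zero])
  obtain ⟨t, ht⟩ := this
  refine ⟨t, fun v w hvw => ?_⟩
  by_contra hne
  have hmem : (v.1, w.1) ∈ S := by
    rw [hS, Finset.mem_filter, Finset.mem_product]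
    exact ⟨⟨v.2, w.2⟩, fun h => hne (Subtype.ext h)⟩
  have : eval t (linR (v.1 - w.1)) ≠ 0 := by
    intro h0
    exact ht (by rw [hP, map_prod]; exact Finset.prod_eq_zero hmem h0)
  rw [eval_linR] at this
  have hsub : dotp (v.1 - w.1) t = dotp v.1 t - dotp w.1 t := by
    rw [dotp, dotp, dotp, ← Finset.sum_sub_distrib]
    refine Finset.sum_congr rfl fun i _ => ?_
    rw [Pi.sub_apply, sub_mul]
  rw [hsub] at this
  exact this (sub_eq_zero.mpr hvw)

lemma vandermonde {ι : Type*} [Fintype ι] {a : ι → ℝ} (ha : Function.Injective a)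
    {c : ι → ℂ} (h : ∀ j : ℕ, ∑ v, c v * ((a v : ℝ) : ℂ) ^ j = 0) : c = 0 := by
  classical
  have hP : ∀ P : Polynomial ℂ, ∑ v, c v * P.eval ((a v : ℝ) : ℂ) = 0 := by
    intro P
    have : ∀ v : ι, c v * P.eval ((a v : ℝ) : ℂ)
        = ∑ i ∈ Finset.range (P.natDegree + 1), P.coeff i * (c v * ((a v : ℝ) : ℂ) ^ i) := by
      intro v
      rw [Polynomial.eval_eq_sum_range, Finset.mul_sum]
      exact Finset.sum_congr rfl fun i _ => by ring
    rw [Finset.sum_congr rfl fun v _ => this v, Finset.sum_comm]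
    refine Finset.sum_eq_zero fun i _ => ?_
    rw [← Finset.mul_sum, h i, mul_zero]
  funext v0
  set P : Polynomial ℂ :=
    ∏ w ∈ Finset.univ.erase v0, (Polynomial.X - Polynomial.C ((a w : ℝ) : ℂ)) with hPdef
  have heval0 : ∀ w : ι, w ≠ v0 → P.eval ((a w : ℝ) : ℂ) = 0 := by
    intro w hw
    rw [hPdef, Polynomial.eval_prod]
    refine Finset.prod_eq_zero (Finset.mem_erase.mpr ⟨hw, Finset.mem_univ w⟩) ?_
    rw [Polynomial.eval_sub, Polynomial.eval_X, Polynomial.eval_C, sub_self]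
  have hne : P.eval ((a v0 : ℝ) : ℂ) ≠ 0 := by
    rw [hPdef, Polynomial.eval_prod]
    rw [Finset.prod_ne_zero_iff]
    intro w hw
    rw [Polynomial.eval_sub, Polynomial.eval_X, Polynomial.eval_C]
    rw [sub_ne_zero]
    intro hcast
    have : a v0 = a w := by exact_mod_cast hcast
    exact (Finset.mem_erase.mp hw).1 (ha this.symm)
  have := hP P
  rw [Finset.sum_eq_single v0 (fun w _ hw => by rw [heval0 w hw, mul_zero])
    (fun h => absurd (Finset.mem_univ v0) h)] at this
  have hc : c v0 = 0 := by
    rcases mul_eq_zero.mp this with h' | h'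
    · exact h'
    · exact absurd h' hne
  simpa using hc

lemma eval_cpx_lin (t u : Fin n → ℝ) :
    eval (cpx t) (lin n u) = ((dotp u t : ℝ) : ℂ) := by
  rw [lin, map_sum, dotp]
  push_cast
  refine Finset.sum_congr rfl fun i _ => ?_
  rw [map_mul, eval_C, eval_X]
  rfl

lemma eq_zero_of_forall_EE {V : Finset (Fin n → ℝ)} {c : {v // v ∈ V} → ℂ}
    (h : ∀ j, EE V j c = 0) : c = 0 := by
  obtain ⟨t, ht⟩ := exists_separating V
  refine vandermonde (a := fun v : {v // v ∈ V} => dotp v.1 t) ht fun j => ?_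
  have hj := h j
  rw [EE] at hj
  simp only [LinearMap.coe_mk, AddHom.coe_mk] at hj
  have hfac : ((j.factorial : ℂ)) ≠ 0 := by exact_mod_cast Nat.factorial_ne_zero j
  have hsum : ∑ v : {v // v ∈ V}, c v • (lin n v.1) ^ j = 0 := by
    rcases smul_eq_zero.mp hj with h' | h'
    · exact absurd h' (inv_ne_zero hfac)
    · exact h'
  have := congrArg (eval (cpx t)) hsum
  rw [map_sum, map_zero] at this
  rw [← this]
  refine Finset.sum_congr rfl fun v _ => ?_
  rw [smul_eq_C_mul, map_mul, eval_C, map_pow, eval_cpx_lin]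

end LeastMapAux
namespace LeastMapAux
open MvPolynomial Finset Complex

variable {n : ℕ}

lemma EE_mem_least {V : Finset (Fin n → ℝ)} {c : {v // v ∈ V} → ℂ} {j : ℕ}
    (hc : c ∈ KK V j) (hne : EE V j c ≠ 0) : EE V j c ∈ leastSpace n V := by
  have h1 : ∀ i, expPart n V (fun v => if h : v ∈ V then c ⟨v, h⟩ else 0) i = EE V i c := by
    intro i
    rw [expPart_eq_EE]
    congr 1
    funext v
    rw [dif_pos v.2]
  exact Submodule.subset_span ⟨fun v => if h : v ∈ V then c ⟨v, h⟩ else 0, j, (h1 j).symm,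
    hne, fun i hi => by rw [h1 i]; exact mem_KK_iff.mp hc i hi⟩

lemma homogComp_mem {V : Finset (Fin n → ℝ)} {p : MvPolynomial (Fin n) ℂ}
    (hp : p ∈ leastSpace n V) (j : ℕ) :
    homogeneousComponent j p ∈ (KK V j).map (EE V j) := by
  have hle : leastSpace n V ≤
      Submodule.comap (homogeneousComponent j) ((KK V j).map (EE V j)) := by
    rw [leastSpace, Submodule.span_le]
    rintro g ⟨c, j₀, rfl, hne, hlow⟩
    simp only [SetLike.mem_coe, Submodule.mem_comap]
    have hgen : expPart n V c j₀ = EE V j₀ (fun v => c v.1) := expPart_eq_EE V c j₀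
    have hc' : (fun v : {v // v ∈ V} => c v.1) ∈ KK V j₀ :=
      mem_KK_iff.mpr fun i hi => by rw [← expPart_eq_EE]; exact hlow i hi
    have hhom : expPart n V c j₀ ∈ homogeneousSubmodule (Fin n) ℂ j₀ := by
      rw [hgen, MvPolynomial.mem_homogeneousSubmodule]
      exact EE_isHomogeneous V j₀ _
    rw [homogeneousComponent_of_mem hhom]
    by_cases hj : j = j₀
    · rw [if_pos hj]
      subst hj
      exact Submodule.mem_map.mpr ⟨_, hc', hgen.symm⟩
    · rw [if_neg hj]
      exact Submodule.zero_mem _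
  exact hle hp

/-- injectivity of the restriction map on the least space -/
lemma least_inj {V : Finset (Fin n → ℝ)} {p : MvPolynomial (Fin n) ℂ}
    (hp : p ∈ leastSpace n V) (hz : ∀ v : {v // v ∈ V}, eval (cpx v.1) p = 0) :
    p = 0 := by
  by_contra hne
  set D := p.totalDegree with hD
  set s := (Finset.range (D + 1)).filter (fun j => homogeneousComponent j p ≠ 0) with hs
  have hsne : s.Nonempty := by
    rw [Finset.nonempty_iff_ne_empty]
    intro hempty
    apply hne
    have h1 : ∑ i ∈ Finset.range (D + 1), homogeneousComponent i p = p :=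
      MvPolynomial.sum_homogeneousComponent p
    rw [← h1]
    refine Finset.sum_eq_zero fun i hi => ?_
    by_contra hne2
    have : i ∈ s := Finset.mem_filter.mpr ⟨hi, hne2⟩
    rw [hempty] at this
    exact absurd this (Finset.notMem_empty i)
  set d := s.max' hsne with hd
  have hd_mem : d ∈ s := s.max'_mem hsne
  have hdne : homogeneousComponent d p ≠ 0 := (Finset.mem_filter.mp hd_mem).2
  obtain ⟨c, hcK, hcE⟩ := Submodule.mem_map.mp (homogComp_mem hp d)
  set c' : {v // v ∈ V} → ℂ := fun v => (starRingEnd ℂ) (c v) with hc'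
  have hc'K : c' ∈ KK V d := by
    rw [mem_KK_iff]
    intro i hi
    rw [hc', EE_conj, mem_KK_iff.mp hcK i hi, map_zero]
  have hkey : ∑ v : {v // v ∈ V}, c' v * eval (cpx v.1) p = 0 :=
    Finset.sum_eq_zero fun v _ => by rw [hz v, mul_zero]
  rw [sum_eval_eq] at hkey
  have hdrange : d ∈ Finset.range (D + 1) := (Finset.mem_filter.mp hd_mem).1
  have hterms : ∀ j ∈ Finset.range (D + 1), j ≠ d →
      apol (homogeneousComponent j p) (EE V j c') = 0 := by
    intro j hj hjd
    rcases lt_or_gt_of_ne hjd with hlt | hgt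
    · rw [mem_KK_iff.mp hc'K j hlt, apol_zero_right]
    · have hzero : homogeneousComponent j p = 0 := by
        by_contra hne2
        exact absurd (Finset.le_max' s j (Finset.mem_filter.mpr ⟨hj, hne2⟩))
          (not_le.mpr hgt)
      rw [hzero, apol_zero_left]
  rw [Finset.sum_eq_single_of_mem d hdrange hterms] at hkey
  have hE : EE V d c' = MvPolynomial.map (starRingEnd ℂ) (homogeneousComponent d p) := by
    rw [hc', EE_conj, hcE]
  rw [hE] at hkey
  have hQ0 : MvPolynomial.map (starRingEnd ℂ) (homogeneousComponent d p) = 0 := by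
    apply eq_zero_of_apol_conj
    rw [map_conj_map_conj]
    exact hkey
  exact absurd hQ0 (map_conj_ne_zero hdne)

end LeastMapAux
namespace LeastMapAux
open MvPolynomial Finset Complex

variable {n : ℕ}

/-- restriction to `V` as a linear map on the least space -/
noncomputable def RR (V : Finset (Fin n → ℝ)) :
    leastSpace n V →ₗ[ℂ] ({v // v ∈ V} → ℂ) where
  toFun p := fun v => eval (cpx v.1) (p : MvPolynomial (Fin n) ℂ)
  map_add' p q := by
    funext v
    simp only [Submodule.coe_add, map_add, Pi.add_apply]
  map_smul' a p := by
    funext v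
    simp only [SetLike.val_smul, RingHom.id_apply, Pi.smul_apply, smul_eq_mul]
    rw [smul_eq_C_mul, map_mul, eval_C]

lemma RR_surjective (V : Finset (Fin n → ℝ)) : Function.Surjective (RR V) := by
  rw [← LinearMap.range_eq_top]
  by_contra hne
  have hlt : LinearMap.range (RR V) < ⊤ := lt_top_iff_ne_top.mpr hne
  obtain ⟨φ, hφne, hφmap⟩ := Submodule.exists_dual_map_eq_bot_of_lt_top hlt inferInstance
  set c : {v // v ∈ V} → ℂ := fun v => φ (fun w => if v = w then 1 else 0) with hcdef
  have hφeq : ∀ w, φ w = ∑ v, w v * c v := by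
    intro w
    rw [LinearMap.pi_apply_eq_sum_univ φ w]
    exact Finset.sum_congr rfl fun v _ => by rw [smul_eq_mul]
  have hcne : c ≠ 0 := by
    intro h0
    apply hφne
    apply LinearMap.ext
    intro w
    rw [hφeq w, h0]
    simp
  have hann : ∀ p ∈ leastSpace n V, ∑ v : {v // v ∈ V}, c v * eval (cpx v.1) p = 0 := by
    intro p hp
    have hmem : RR V ⟨p, hp⟩ ∈ LinearMap.range (RR V) := ⟨⟨p, hp⟩, rfl⟩
    have h2 : φ (RR V ⟨p, hp⟩) ∈ Submodule.map φ (LinearMap.range (RR V)) :=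
      Submodule.mem_map_of_mem hmem
    rw [hφmap] at h2
    have h3 : φ (RR V ⟨p, hp⟩) = 0 := (Submodule.mem_bot ℂ).mp h2
    rw [hφeq] at h3
    rw [← h3]
    exact Finset.sum_congr rfl fun v _ => mul_comm _ _
  have hex : ∃ j, EE V j c ≠ 0 := by
    by_contra hall
    push_neg at hall
    exact hcne (eq_zero_of_forall_EE fun j => not_ne_iff.mp fun h => (h (hall j)).elim)
  have hd : EE V (Nat.find hex) c ≠ 0 := Nat.find_spec hex
  have hcK : c ∈ KK V (Nat.find hex) :=
    mem_KK_iff.mpr fun i hi => not_ne_iff.mp (Nat.find_min hex hi)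
  set d := Nat.find hex with hddef
  set c' : {v // v ∈ V} → ℂ := fun v => (starRingEnd ℂ) (c v) with hc'def
  have hc'K : c' ∈ KK V d := by
    rw [mem_KK_iff]
    intro i hi
    rw [hc'def, EE_conj, mem_KK_iff.mp hcK i hi, map_zero]
  set q := EE V d c' with hqdef
  have hq_conj : q = MvPolynomial.map (starRingEnd ℂ) (EE V d c) := EE_conj V d c
  have hqne : q ≠ 0 := by rw [hq_conj]; exact map_conj_ne_zero hd
  have hqmem : q ∈ leastSpace n V := EE_mem_least hc'K hqne
  have h0 := hann q hqmem
  rw [sum_eval_eq] at h0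
  have hqhom : q.IsHomogeneous d := EE_isHomogeneous V d c'
  have htd : q.totalDegree = d := hqhom.totalDegree hqne
  have hqmem' : q ∈ homogeneousSubmodule (Fin n) ℂ d :=
    (MvPolynomial.mem_homogeneousSubmodule _ _).mpr hqhom
  have hcomp : ∀ j, homogeneousComponent j q = if j = d then q else 0 :=
    fun j => homogeneousComponent_of_mem hqmem'
  have hterms : ∀ j ∈ Finset.range (q.totalDegree + 1), j ≠ d →
      apol (homogeneousComponent j q) (EE V j c) = 0 := by
    intro j _ hjd
    rw [hcomp j, if_neg hjd, apol_zero_left]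
  rw [Finset.sum_eq_single_of_mem d
    (by rw [htd]; exact Finset.self_mem_range_succ d) hterms] at h0
  rw [hcomp d, if_pos rfl, hq_conj] at h0
  exact hd (eq_zero_of_apol_conj h0)

lemma RR_injective (V : Finset (Fin n → ℝ)) : Function.Injective (RR V) := by
  rw [← LinearMap.ker_eq_bot (M := leastSpace n V)]
  rw [Submodule.eq_bot_iff]
  intro p hp
  rw [LinearMap.mem_ker] at hp
  have hz : ∀ v : {v // v ∈ V}, eval (cpx v.1) (p : MvPolynomial (Fin n) ℂ) = 0 :=
    fun v => congrFun hp v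
  have := least_inj p.2 hz
  exact Subtype.ext this

end LeastMapAux
theorem least_map_bijective (n : ℕ) (V : Finset (Fin n → ℝ)) :
    Function.Bijective (fun (p : leastSpace n V) (v : {v // v ∈ V}) =>
      MvPolynomial.eval (fun i => ((v.1 i : ℝ) : ℂ)) (p : MvPolynomial (Fin n) ℂ)) ∧
    Module.finrank ℂ (leastSpace n V) = V.card := by
  have hbij : Function.Bijective (LeastMapAux.RR V) :=
    ⟨LeastMapAux.RR_injective V, LeastMapAux.RR_surjective V⟩
  constructor
  · exact hbij
  · rw [LinearEquiv.finrank_eq (LinearEquiv.ofBijective _ hbij),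
      Module.finrank_fintype_fun_eq_card, Fintype.card_coe]
end
end

section
/- Let 𝕀' be a semi-external subset of 𝕀(X). Then the polynomials Q_I = p_{X(I)}, I ∈ 𝕀', form a basis for P_+(X,𝕀') := span{p_Y : Y ⊂ X, Y ∩ I = ∅ for some I ∈ 𝕀'}. In particular dim P_+(X,𝕀') = #𝕀' and dim(P_+(X,𝕀') ∩ Π_j^0) = #{I ∈ 𝕀' : val(I) = j}. -/
open MvPolynomial

attribute [local instance] Classical.propDecidable

noncomputable section

lemma lin_add (n : ℕ) (u v : Fin n → ℝ) : lin n (u + v) = lin n u + lin n v := by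
  unfold lin
  rw [← Finset.sum_add_distrib]
  refine Finset.sum_congr rfl fun i _ => ?_
  rw [Pi.add_apply, Complex.ofReal_add, map_add, add_mul]

lemma lin_smul (n : ℕ) (c : ℝ) (v : Fin n → ℝ) : lin n (c • v) = (c : ℂ) • lin n v := by
  unfold lin
  rw [Finset.smul_sum]
  refine Finset.sum_congr rfl fun i _ => ?_
  rw [Pi.smul_apply, smul_eq_mul, Complex.ofReal_mul, map_mul, ← MvPolynomial.C_mul', mul_assoc]

lemma lin_zero (n : ℕ) : lin n (0 : Fin n → ℝ) = 0 := by simp [lin]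

lemma lin_sub (n : ℕ) (u v : Fin n → ℝ) : lin n (u - v) = lin n u - lin n v := by
  unfold lin
  rw [← Finset.sum_sub_distrib]
  refine Finset.sum_congr rfl fun i _ => ?_
  rw [Pi.sub_apply, Complex.ofReal_sub, map_sub, sub_mul]

lemma lin_sum_smul {n : ℕ} {ι : Type*} (s : Finset ι) (f : ι → ℝ) (v : ι → Fin n → ℝ) :
    lin n (∑ i ∈ s, f i • v i) = ∑ i ∈ s, (f i : ℂ) • lin n (v i) := by
  classical
  induction s using Finset.induction_on with
  | empty => simp [lin_zero]
  | insert _ _ h ih => rw [Finset.sum_insert h, lin_add, lin_smul, Finset.sum_insert h, ih]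

lemma lin_coeff {n : ℕ} (v : Fin n → ℝ) (i : Fin n) :
    MvPolynomial.coeff (Finsupp.single i 1) (lin n v) = (v i : ℂ) := by
  unfold lin
  rw [MvPolynomial.coeff_sum]
  rw [Finset.sum_eq_single i]
  · simp [MvPolynomial.coeff_C_mul, MvPolynomial.coeff_X]
  · intro b _ hb
    rw [MvPolynomial.coeff_C_mul, MvPolynomial.coeff_X', if_neg, mul_zero]
    intro h
    exact hb ((Finsupp.single_left_injective one_ne_zero) h.symm).symm
  · simp

lemma lin_ne_zero {n : ℕ} {v : Fin n → ℝ} (hv : v ≠ 0) : lin n v ≠ 0 := by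
  obtain ⟨i, hi⟩ : ∃ i, v i ≠ 0 := by
    by_contra h; push_neg at h; exact hv (funext h)
  intro h
  have := lin_coeff v i
  rw [h, MvPolynomial.coeff_zero] at this
  exact hi (by exact_mod_cast this.symm)

lemma pProd_insert {n : ℕ} {ι : Type*} [DecidableEq ι] (x : ι → Fin n → ℝ) {Y : Finset ι} {b : ι}
    (hb : b ∉ Y) : pProd x (insert b Y) = lin n (x b) * pProd x Y :=
  Finset.prod_insert hb

lemma pProd_erase_mul {n : ℕ} {ι : Type*} [DecidableEq ι] (x : ι → Fin n → ℝ) {Y : Finset ι}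
    {i : ι} (hi : i ∈ Y) : pProd x Y = lin n (x i) * pProd x (Y.erase i) :=
  (Finset.mul_prod_erase Y _ hi).symm

lemma pProd_map_succ {n N : ℕ} (x : Fin (N+1) → Fin n → ℝ) (S : Finset (Fin N)) :
    pProd x (S.map (Fin.succEmb N)) = pProd (x ∘ Fin.succ) S := by
  rw [pProd, Finset.prod_map]
  rfl

-- ============ projection onto the hyperplane orthogonal to w ============

def dlin {n : ℕ} (w : Fin n → ℝ) : (Fin n → ℝ) →ₗ[ℝ] ℝ where
  toFun v := dotp v w
  map_add' u v := by
    unfold dotp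
    rw [← Finset.sum_add_distrib]
    exact Finset.sum_congr rfl fun i _ => by rw [Pi.add_apply, add_mul]
  map_smul' c v := by
    unfold dotp
    simp only [RingHom.id_apply, Finset.smul_sum]
    exact Finset.sum_congr rfl fun i _ => by rw [Pi.smul_apply, smul_eq_mul, smul_eq_mul, mul_assoc]

def projL {n : ℕ} (w : Fin n → ℝ) : (Fin n → ℝ) →ₗ[ℝ] (Fin n → ℝ) :=
  LinearMap.id - ((dotp w w)⁻¹ • dlin w).smulRight w

lemma projL_apply {n : ℕ} (w v : Fin n → ℝ) :
    projL w v = v - ((dotp w w)⁻¹ * dotp v w) • w := rfl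

lemma dotp_self_ne_zero {n : ℕ} {w : Fin n → ℝ} (hw : w ≠ 0) : dotp w w ≠ 0 := by
  obtain ⟨i, hi⟩ : ∃ i, w i ≠ 0 := by
    by_contra h; push_neg at h; exact hw (funext h)
  have : 0 < dotp w w :=
    Finset.sum_pos' (fun i _ => mul_self_nonneg _)
      ⟨i, Finset.mem_univ i, by have := mul_self_nonneg (w i); have h2 := mul_self_eq_zero (a := w i); exact lt_of_le_of_ne this (fun h => hi (h2.1 h.symm))⟩
  exact ne_of_gt this

lemma projL_w {n : ℕ} {w : Fin n → ℝ} (hw : w ≠ 0) : projL w w = 0 := by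
  rw [projL_apply, inv_mul_cancel₀ (dotp_self_ne_zero hw), one_smul, sub_self]

lemma mem_span_insert_iff_proj {n : ℕ} {w : Fin n → ℝ} (hw : w ≠ 0) (S : Set (Fin n → ℝ))
    (v : Fin n → ℝ) :
    v ∈ Submodule.span ℝ (insert w S) ↔ projL w v ∈ Submodule.span ℝ (projL w '' S) := by
  rw [Submodule.span_image]
  constructor
  · intro hv
    rw [Submodule.span_insert] at hv
    obtain ⟨y, hy, u, hu, rfl⟩ := Submodule.mem_sup.1 hv
    obtain ⟨a, rfl⟩ := Submodule.mem_span_singleton.1 hy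
    rw [map_add, map_smul, projL_w hw, smul_zero, zero_add]
    exact Submodule.mem_map_of_mem hu
  · intro hv
    obtain ⟨u, hu, huv⟩ := hv
    have hdecomp : v = ((dotp w w)⁻¹ * dotp v w) • w + projL w v := by
      rw [projL_apply]; abel
    rw [hdecomp, ← huv]
    apply Submodule.add_mem
    · exact Submodule.smul_mem _ _ (Submodule.subset_span (Set.mem_insert w S))
    · rw [projL_apply]
      apply Submodule.sub_mem
      · exact Submodule.span_mono (Set.subset_insert w S) hu
      · exact Submodule.smul_mem _ _ (Submodule.subset_span (Set.mem_insert w S))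

-- ============ the restriction homomorphism to w-perp ============

def resHom {n : ℕ} (w : Fin n → ℝ) :
    MvPolynomial (Fin n) ℂ →ₐ[ℂ] MvPolynomial (Fin n) ℂ :=
  MvPolynomial.aeval (fun i =>
    MvPolynomial.X i - MvPolynomial.C ((((dotp w w)⁻¹ * w i : ℝ)) : ℂ) * lin n w)

lemma resHom_lin {n : ℕ} (w v : Fin n → ℝ) : resHom w (lin n v) = lin n (projL w v) := by
  have h1 : resHom w (lin n v) = ∑ i, MvPolynomial.C ((v i : ℝ) : ℂ) *
      (MvPolynomial.X i - MvPolynomial.C ((((dotp w w)⁻¹ * w i : ℝ)) : ℂ) * lin n w) := by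
    rw [show lin n v = ∑ i, MvPolynomial.C ((v i : ℝ) : ℂ) * MvPolynomial.X i from rfl, map_sum]
    refine Finset.sum_congr rfl fun i _ => ?_
    rw [map_mul, resHom, MvPolynomial.aeval_C, MvPolynomial.aeval_X, MvPolynomial.algebraMap_eq]
  rw [h1, projL_apply, lin_sub, lin_smul]
  simp only [mul_sub, Finset.sum_sub_distrib]
  congr 1
  rw [← MvPolynomial.C_mul']
  have : ∀ i, MvPolynomial.C ((v i : ℝ) : ℂ) *
      (MvPolynomial.C ((((dotp w w)⁻¹ * w i : ℝ)) : ℂ) * lin n w)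
      = MvPolynomial.C (((v i * ((dotp w w)⁻¹ * w i) : ℝ)) : ℂ) * lin n w := by
    intro i
    rw [← mul_assoc, ← map_mul, ← Complex.ofReal_mul]
  simp only [this, ← Finset.sum_mul, ← map_sum]
  congr 2
  rw [← Complex.ofReal_sum]
  congr 1
  simp only [dotp, Finset.mul_sum]
  exact Finset.sum_congr rfl fun i _ => by ring

lemma resHom_lin_self {n : ℕ} {w : Fin n → ℝ} (hw : w ≠ 0) : resHom w (lin n w) = 0 := by
  rw [resHom_lin, projL_w hw, lin_zero]

-- ============ XofY under reindexing ============

lemma mem_XofY {n N : ℕ} {x : Fin N → Fin n → ℝ} {Y : Finset (Fin N)} {i : Fin N} :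
    i ∈ XofY x Y ↔ i ∉ Y ∧ x i ∉ Submodule.span ℝ (x '' {j | j ∈ Y ∧ j < i}) := by
  simp [XofY]

lemma mem_map_succ {N : ℕ} (S : Finset (Fin N)) (k : Fin N) :
    k.succ ∈ S.map (Fin.succEmb N) ↔ k ∈ S := by
  constructor
  · intro h
    obtain ⟨j, hj, hjk⟩ := Finset.mem_map.1 h
    cases Fin.succ_injective _ (show Fin.succ j = Fin.succ k from hjk)
    exact hj
  · intro h
    exact Finset.mem_map_of_mem _ h

lemma zero_not_mem_map_succ {N : ℕ} (S : Finset (Fin N)) :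
    (0 : Fin (N+1)) ∉ S.map (Fin.succEmb N) := by
  intro h
  obtain ⟨j, -, hj⟩ := Finset.mem_map.1 h
  exact Fin.succ_ne_zero j hj

lemma lt_zero_set_empty {N : ℕ} (S : Finset (Fin (N+1))) :
    {j | j ∈ S ∧ j < (0 : Fin (N+1))} = (∅ : Set (Fin (N+1))) := by
  ext j; simp [Fin.not_lt_zero]

lemma set_succ_map {N : ℕ} (J : Finset (Fin N)) (k : Fin N) :
    {j | j ∈ J.map (Fin.succEmb N) ∧ j < k.succ} = Fin.succ '' {j | j ∈ J ∧ j < k} := by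
  ext j
  simp only [Set.mem_setOf_eq, Finset.mem_map, Fin.succEmb, Function.Embedding.coeFn_mk,
    Set.mem_image]
  constructor
  · rintro ⟨⟨j', hj', rfl⟩, hlt⟩
    exact ⟨j', ⟨hj', by rwa [Fin.succ_lt_succ_iff] at hlt⟩, rfl⟩
  · rintro ⟨j', ⟨hj', hlt⟩, rfl⟩
    exact ⟨⟨j', hj', rfl⟩, by rwa [Fin.succ_lt_succ_iff]⟩

lemma set_insert_succ {N : ℕ} (J : Finset (Fin N)) (k : Fin N) :
    {j | j ∈ insert (0 : Fin (N+1)) (J.map (Fin.succEmb N)) ∧ j < k.succ}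
      = insert (0 : Fin (N+1)) (Fin.succ '' {j | j ∈ J ∧ j < k}) := by
  rw [← set_succ_map]
  ext j
  simp only [Set.mem_setOf_eq, Finset.mem_insert, Set.mem_insert_iff]
  constructor
  · rintro ⟨h0 | hm, hlt⟩
    · exact Or.inl h0
    · exact Or.inr ⟨hm, hlt⟩
  · rintro (rfl | ⟨hm, hlt⟩)
    · exact ⟨Or.inl rfl, Fin.succ_pos k⟩
    · exact ⟨Or.inr hm, hlt⟩

lemma image_set_succ {n N : ℕ} (x : Fin (N+1) → Fin n → ℝ) (J : Finset (Fin N)) (k : Fin N) :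
    x '' {j | j ∈ J.map (Fin.succEmb N) ∧ j < k.succ}
      = (x ∘ Fin.succ) '' {j | j ∈ J ∧ j < k} := by
  rw [set_succ_map, Set.image_image]
  rfl

lemma XofY_map_of_ne {n N : ℕ} {x : Fin (N+1) → Fin n → ℝ} (hw : x 0 ≠ 0)
    (J : Finset (Fin N)) :
    XofY x (J.map (Fin.succEmb N))
      = insert 0 ((XofY (x ∘ Fin.succ) J).map (Fin.succEmb N)) := by
  ext i
  induction i using Fin.cases with
  | zero =>
    have hR : (0 : Fin (N+1)) ∈ insert 0 ((XofY (x ∘ Fin.succ) J).map (Fin.succEmb N)) :=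
      Finset.mem_insert_self _ _
    simp only [hR, iff_true]
    rw [mem_XofY, lt_zero_set_empty]
    exact ⟨zero_not_mem_map_succ J, by simpa using hw⟩
  | succ k =>
    rw [mem_XofY]
    have h1 : (Fin.succ k ∈ insert 0 ((XofY (x ∘ Fin.succ) J).map (Fin.succEmb N)))
        ↔ k ∈ XofY (x ∘ Fin.succ) J := by
      rw [Finset.mem_insert, mem_map_succ]
      exact ⟨fun h => h.resolve_left (Fin.succ_ne_zero k), Or.inr⟩
    rw [h1, mem_XofY, image_set_succ, mem_map_succ]
    rfl

lemma XofY_map_of_eq {n N : ℕ} {x : Fin (N+1) → Fin n → ℝ} (hw : x 0 = 0)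
    (J : Finset (Fin N)) :
    XofY x (J.map (Fin.succEmb N)) = (XofY (x ∘ Fin.succ) J).map (Fin.succEmb N) := by
  ext i
  induction i using Fin.cases with
  | zero =>
    rw [mem_XofY, lt_zero_set_empty]
    simp only [Set.image_empty, Submodule.span_empty, Submodule.mem_bot]
    constructor
    · rintro ⟨-, h⟩
      exact absurd hw h
    · intro h
      exact absurd h (zero_not_mem_map_succ _)
  | succ k =>
    rw [mem_XofY, mem_map_succ, image_set_succ, mem_map_succ, mem_XofY]
    rfl

lemma XofY_insert_zero {n N : ℕ} {x : Fin (N+1) → Fin n → ℝ} (hw : x 0 ≠ 0)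
    (J : Finset (Fin N)) :
    XofY x (insert 0 (J.map (Fin.succEmb N)))
      = (XofY (fun k => projL (x 0) (x k.succ)) J).map (Fin.succEmb N) := by
  ext i
  induction i using Fin.cases with
  | zero =>
    constructor
    · intro h
      rw [mem_XofY] at h
      exact absurd (Finset.mem_insert_self 0 _) h.1
    · intro h
      exact absurd h (zero_not_mem_map_succ _)
  | succ k =>
    rw [mem_XofY, mem_map_succ, mem_XofY]
    have himg : x '' {j | j ∈ insert (0:Fin (N+1)) (J.map (Fin.succEmb N)) ∧ j < k.succ}
        = insert (x 0) ((x ∘ Fin.succ) '' {j | j ∈ J ∧ j < k}) := by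
      rw [set_insert_succ, Set.image_insert_eq, Set.image_image]
      rfl
    rw [himg]
    have hmem : (Fin.succ k ∈ insert (0:Fin (N+1)) (J.map (Fin.succEmb N))) ↔ k ∈ J := by
      rw [Finset.mem_insert, mem_map_succ]
      exact ⟨fun h => h.resolve_left (Fin.succ_ne_zero k), Or.inr⟩
    rw [hmem]
    have hspan := mem_span_insert_iff_proj hw ((x ∘ Fin.succ) '' {j | j ∈ J ∧ j < k}) (x k.succ)
    rw [Set.image_image] at hspan
    constructor
    · rintro ⟨h1, h2⟩
      exact ⟨h1, fun hc => h2 (hspan.2 hc)⟩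
    · rintro ⟨h1, h2⟩
      exact ⟨h1, fun hc => h2 (hspan.1 hc)⟩

-- ============ QB under reindexing ============

lemma QB_map_of_ne {n N : ℕ} {x : Fin (N+1) → Fin n → ℝ} (hw : x 0 ≠ 0) (J : Finset (Fin N)) :
    QB x (J.map (Fin.succEmb N)) = lin n (x 0) * QB (x ∘ Fin.succ) J := by
  rw [QB, XofY_map_of_ne hw]
  rw [show pProd x (insert 0 ((XofY (x ∘ Fin.succ) J).map (Fin.succEmb N)))
      = lin n (x 0) * pProd x ((XofY (x ∘ Fin.succ) J).map (Fin.succEmb N)) from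
    Finset.prod_insert (zero_not_mem_map_succ _), pProd_map_succ]
  rfl

lemma QB_map_of_eq {n N : ℕ} {x : Fin (N+1) → Fin n → ℝ} (hw : x 0 = 0) (J : Finset (Fin N)) :
    QB x (J.map (Fin.succEmb N)) = QB (x ∘ Fin.succ) J := by
  rw [QB, XofY_map_of_eq hw, pProd_map_succ]
  rfl

lemma resHom_QB_insert {n N : ℕ} {x : Fin (N+1) → Fin n → ℝ} (hw : x 0 ≠ 0)
    (J : Finset (Fin N)) :
    resHom (x 0) (QB x (insert 0 (J.map (Fin.succEmb N))))
      = QB (fun k => projL (x 0) (x k.succ)) J := by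
  rw [QB, XofY_insert_zero hw, pProd_map_succ, QB, pProd, pProd, map_prod]
  exact Finset.prod_congr rfl fun k _ => resHom_lin _ _

lemma resHom_QB_map {n N : ℕ} {x : Fin (N+1) → Fin n → ℝ} (hw : x 0 ≠ 0) (J : Finset (Fin N)) :
    resHom (x 0) (QB x (J.map (Fin.succEmb N))) = 0 := by
  rw [QB_map_of_ne hw, map_mul, resHom_lin_self hw, zero_mul]

-- ============ independence transfer ============

lemma isIndep_of_map {n N : ℕ} {x : Fin (N+1) → Fin n → ℝ} {J : Finset (Fin N)}
    (h : IsIndepSet x (J.map (Fin.succEmb N))) : IsIndepSet (x ∘ Fin.succ) J := by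
  unfold IsIndepSet at h ⊢
  have := h.comp (fun b : {b // b ∈ J} => (⟨Fin.succ b.1, (mem_map_succ J b.1).2 b.2⟩ :
    {b // b ∈ J.map (Fin.succEmb N)}))
    (fun a b hab => Subtype.ext (Fin.succ_injective _ (congrArg Subtype.val hab)))
  exact this

lemma projL_eq_zero {n : ℕ} {w v : Fin n → ℝ} (h : projL w v = 0) :
    v = ((dotp w w)⁻¹ * dotp v w) • w := by
  rw [projL_apply] at h
  exact sub_eq_zero.1 h

lemma isIndep_proj_of_insert {n N : ℕ} {x : Fin (N+1) → Fin n → ℝ} {J : Finset (Fin N)}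
    (h : IsIndepSet x (insert 0 (J.map (Fin.succEmb N)))) :
    IsIndepSet (fun k => projL (x 0) (x k.succ)) J := by
  classical
  set w := x 0 with hwdef
  unfold IsIndepSet at h ⊢
  rw [Fintype.linearIndependent_iff] at h ⊢
  intro g hg
  set u : Fin n → ℝ := ∑ b : {b // b ∈ J}, g b • x b.1.succ with hu
  have hproju : projL w u = 0 := by
    rw [hu, map_sum]
    rw [← hg]
    exact Finset.sum_congr rfl fun b _ => by rw [map_smul]
  have hukerw : u = ((dotp w w)⁻¹ * dotp u w) • w := projL_eq_zero hproju
  set c : ℝ := (dotp w w)⁻¹ * dotp u w with hc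
  set gp : Fin N → ℝ := fun k => if hk : k ∈ J then g ⟨k, hk⟩ else 0 with hgp
  set G : Fin (N+1) → ℝ := Fin.cases (-c) gp with hG
  have hGs : ∀ k : Fin N, G k.succ = gp k := fun k => by rw [hG]; exact Fin.cases_succ k
  have hsum : ∑ i : {i // i ∈ insert (0 : Fin (N+1)) (J.map (Fin.succEmb N))}, G i.1 • x i.1
      = 0 := by
    rw [Finset.sum_coe_sort _ (fun i => G i • x i),
      Finset.sum_insert (zero_not_mem_map_succ J), Finset.sum_map]
    have h0 : G 0 = -c := rfl
    have hsucc : ∀ k ∈ J, G ((Fin.succEmb N) k) • x ((Fin.succEmb N) k) = gp k • x k.succ :=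
      fun k _ => by rw [show ((Fin.succEmb N) k) = k.succ from rfl, hGs]
    rw [Finset.sum_congr rfl hsucc, h0]
    have : ∑ k ∈ J, gp k • x k.succ = u := by
      rw [hu, ← Finset.sum_coe_sort J (fun k => gp k • x k.succ)]
      exact Finset.sum_congr rfl fun b _ => by rw [hgp]; simp [b.2]
    rw [this, hukerw, neg_smul, neg_add_cancel]
  have hall := h (fun i => G i.1) hsum
  intro b
  have h2 : G b.1.succ = 0 :=
    hall ⟨b.1.succ, Finset.mem_insert_of_mem ((mem_map_succ J b.1).2 b.2)⟩
  rw [hGs, hgp] at h2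
  simpa [b.2] using h2

lemma not_isIndep_of_zero_mem {n N : ℕ} {x : Fin (N+1) → Fin n → ℝ} (hw : x 0 = 0)
    {I : Finset (Fin (N+1))} (h0 : (0 : Fin (N+1)) ∈ I) : ¬ IsIndepSet x I := by
  intro h
  exact (h.ne_zero ⟨0, h0⟩) hw

-- ============ sum reindexing ============

lemma sum_filter_zero_mem {N : ℕ} {M : Type*} [AddCommMonoid M]
    (F : Finset (Fin (N+1)) → M) :
    ∑ I ∈ Finset.univ.filter (fun I : Finset (Fin (N+1)) => 0 ∈ I), F I
      = ∑ J : Finset (Fin N), F (insert 0 (J.map (Fin.succEmb N))) := by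
  classical
  refine Finset.sum_nbij' (fun I => (I.erase 0).preimage Fin.succ
      ((Fin.succ_injective N).injOn))
    (fun J => insert 0 (J.map (Fin.succEmb N))) ?_ ?_ ?_ ?_ ?_
  · intro a _; exact Finset.mem_univ _
  · intro J _
    simp [Finset.mem_filter]
  · intro I hI
    rw [Finset.mem_filter] at hI
    ext i
    induction i using Fin.cases with
    | zero => simp [hI.2]
    | succ k =>
      rw [Finset.mem_insert, mem_map_succ, Finset.mem_preimage, Finset.mem_erase]
      constructor
      · rintro (h | h)
        · exact absurd h (Fin.succ_ne_zero k)
        · exact h.2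
      · intro h
        exact Or.inr ⟨Fin.succ_ne_zero k, h⟩
  · intro J _
    show ((insert 0 (J.map (Fin.succEmb N))).erase 0).preimage Fin.succ
      ((Fin.succ_injective N).injOn) = J
    ext k
    rw [Finset.mem_preimage, Finset.erase_insert (zero_not_mem_map_succ J), mem_map_succ]
  · intro I hI
    rw [Finset.mem_filter] at hI
    congr 1
    ext i
    induction i using Fin.cases with
    | zero => simp [hI.2]
    | succ k =>
      rw [Finset.mem_insert, mem_map_succ, Finset.mem_preimage, Finset.mem_erase]
      constructor
      · intro h
        exact Or.inr ⟨Fin.succ_ne_zero k, h⟩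
      · rintro (h | h)
        · exact absurd h (Fin.succ_ne_zero k)
        · exact h.2

lemma sum_filter_zero_not_mem {N : ℕ} {M : Type*} [AddCommMonoid M]
    (F : Finset (Fin (N+1)) → M) :
    ∑ I ∈ Finset.univ.filter (fun I : Finset (Fin (N+1)) => ¬ (0 ∈ I)), F I
      = ∑ J : Finset (Fin N), F (J.map (Fin.succEmb N)) := by
  classical
  refine Finset.sum_nbij' (fun I => I.preimage Fin.succ ((Fin.succ_injective N).injOn))
    (fun J => J.map (Fin.succEmb N)) ?_ ?_ ?_ ?_ ?_
  · intro a _; exact Finset.mem_univ _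
  · intro J _
    simp only [Finset.mem_filter, Finset.mem_univ, true_and]
    exact zero_not_mem_map_succ J
  · intro I hI
    rw [Finset.mem_filter] at hI
    ext i
    induction i using Fin.cases with
    | zero =>
      simp only [Finset.mem_map]
      constructor
      · rintro ⟨j, -, hj⟩; exact absurd hj (Fin.succ_ne_zero j)
      · intro h; exact absurd h hI.2
    | succ k =>
      rw [mem_map_succ, Finset.mem_preimage]
  · intro J _
    show (J.map (Fin.succEmb N)).preimage Fin.succ ((Fin.succ_injective N).injOn) = J
    ext k
    rw [Finset.mem_preimage, mem_map_succ]
  · intro I hI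
    rw [Finset.mem_filter] at hI
    congr 1
    ext i
    induction i using Fin.cases with
    | zero =>
      simp only [Finset.mem_map]
      constructor
      · intro h; exact absurd h hI.2
      · rintro ⟨j, -, hj⟩; exact absurd hj (Fin.succ_ne_zero j)
    | succ k =>
      rw [mem_map_succ, Finset.mem_preimage]

-- ============ finset preimage helpers ============

lemma map_preimage_succ {N : ℕ} {I : Finset (Fin (N+1))} (h0 : (0 : Fin (N+1)) ∉ I) :
    (I.preimage Fin.succ ((Fin.succ_injective N).injOn)).map (Fin.succEmb N) = I := by
  ext i
  induction i using Fin.cases with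
  | zero =>
    constructor
    · intro h; exact absurd h (zero_not_mem_map_succ _)
    · intro h; exact absurd h h0
  | succ k => rw [mem_map_succ, Finset.mem_preimage]

lemma insert_preimage_erase {N : ℕ} {I : Finset (Fin (N+1))} (h0 : (0 : Fin (N+1)) ∈ I) :
    insert 0 (((I.erase 0).preimage Fin.succ ((Fin.succ_injective N).injOn)).map
      (Fin.succEmb N)) = I := by
  ext i
  induction i using Fin.cases with
  | zero => simp [h0]
  | succ k =>
    rw [Finset.mem_insert, mem_map_succ, Finset.mem_preimage, Finset.mem_erase]
    constructor
    · rintro (h | h)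
      · exact absurd h (Fin.succ_ne_zero k)
      · exact h.2
    · intro h
      exact Or.inr ⟨Fin.succ_ne_zero k, h⟩

-- ============ the master independence lemma ============

lemma master_indep {n : ℕ} : ∀ (N : ℕ) (x : Fin N → Fin n → ℝ) (c : Finset (Fin N) → ℂ),
    (∀ I, ¬ IsIndepSet x I → c I = 0) →
    (∑ I : Finset (Fin N), c I • QB x I) = 0 → ∀ I, c I = 0 := by
  intro N
  induction N with
  | zero =>
    intro x c _ hsum I
    have hIempty : ∀ K : Finset (Fin 0), K = ∅ := fun K => Finset.eq_empty_of_isEmpty K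
    have huniv : (Finset.univ : Finset (Finset (Fin 0))) = {∅} := by
      ext K
      simp only [Finset.mem_univ, Finset.mem_singleton, true_iff]
      exact hIempty K
    rw [huniv, Finset.sum_singleton] at hsum
    have hQB : QB x (∅ : Finset (Fin 0)) = 1 := by
      rw [QB, hIempty (XofY x ∅)]
      exact Finset.prod_empty
    rw [hQB, smul_eq_zero] at hsum
    rw [hIempty I]
    exact hsum.resolve_right one_ne_zero
  | succ N ih =>
    intro x c hsupp hsum
    by_cases hw : x 0 = 0
    · -- the first vector is zero
      have hzero : ∀ K : Finset (Fin (N+1)), (0 : Fin (N+1)) ∈ K → c K = 0 :=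
        fun K hK => hsupp K (not_isIndep_of_zero_mem hw hK)
      have hsplit := Finset.sum_filter_add_sum_filter_not Finset.univ
        (fun K : Finset (Fin (N+1)) => (0 : Fin (N+1)) ∈ K) (fun K => c K • QB x K)
      have hfirst : ∑ K ∈ Finset.univ.filter (fun K : Finset (Fin (N+1)) => (0:Fin (N+1)) ∈ K),
          c K • QB x K = 0 :=
        Finset.sum_eq_zero fun K hK => by
          rw [hzero K (Finset.mem_filter.1 hK).2, zero_smul]
      rw [← hsplit, hfirst, zero_add, sum_filter_zero_not_mem] at hsum
      have hsum' : ∑ J : Finset (Fin N), c (J.map (Fin.succEmb N)) • QB (x ∘ Fin.succ) J = 0 := by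
        rw [← hsum]
        exact Finset.sum_congr rfl fun J _ => by rw [QB_map_of_eq hw]
      have hc' := ih (x ∘ Fin.succ) (fun J => c (J.map (Fin.succEmb N)))
        (fun J hJ => hsupp _ (fun hind => hJ (isIndep_of_map hind))) hsum'
      intro I
      by_cases h0 : (0 : Fin (N+1)) ∈ I
      · exact hzero I h0
      · rw [← map_preimage_succ h0]
        exact hc' _
    · -- the first vector is nonzero
      -- Step A : kill the terms containing 0 by applying resHom
      have hres : ∑ K : Finset (Fin (N+1)), c K • resHom (x 0) (QB x K) = 0 := by
        have := congrArg (resHom (x 0)) hsum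
        rw [map_zero, map_sum] at this
        rw [← this]
        exact Finset.sum_congr rfl fun K _ => by rw [map_smul]
      have hsplit := Finset.sum_filter_add_sum_filter_not Finset.univ
        (fun K : Finset (Fin (N+1)) => (0 : Fin (N+1)) ∈ K)
        (fun K => c K • resHom (x 0) (QB x K))
      rw [← hsplit, sum_filter_zero_mem, sum_filter_zero_not_mem] at hres
      have hsecond : ∑ J : Finset (Fin N),
          c (J.map (Fin.succEmb N)) • resHom (x 0) (QB x (J.map (Fin.succEmb N))) = 0 :=
        Finset.sum_eq_zero fun J _ => by rw [resHom_QB_map hw, smul_zero]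
      rw [hsecond, add_zero] at hres
      have hresJ : ∑ J : Finset (Fin N), c (insert 0 (J.map (Fin.succEmb N))) •
          QB (fun k => projL (x 0) (x k.succ)) J = 0 := by
        rw [← hres]
        exact Finset.sum_congr rfl fun J _ => by rw [resHom_QB_insert hw]
      have hcbar := ih (fun k => projL (x 0) (x k.succ))
        (fun J => c (insert 0 (J.map (Fin.succEmb N))))
        (fun J hJ => hsupp _ (fun hind => hJ (isIndep_proj_of_insert hind))) hresJ
      have hzero : ∀ K : Finset (Fin (N+1)), (0 : Fin (N+1)) ∈ K → c K = 0 := by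
        intro K hK
        rw [← insert_preimage_erase hK]
        exact hcbar _
      -- Step B : cancel lin (x 0) from the remaining sum
      have hfirst : ∑ K ∈ Finset.univ.filter (fun K : Finset (Fin (N+1)) => (0:Fin (N+1)) ∈ K),
          c K • QB x K = 0 :=
        Finset.sum_eq_zero fun K hK => by
          rw [hzero K (Finset.mem_filter.1 hK).2, zero_smul]
      have hsplit2 := Finset.sum_filter_add_sum_filter_not Finset.univ
        (fun K : Finset (Fin (N+1)) => (0 : Fin (N+1)) ∈ K) (fun K => c K • QB x K)
      rw [← hsplit2, hfirst, zero_add, sum_filter_zero_not_mem] at hsum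
      have hsum' : lin n (x 0) * ∑ J : Finset (Fin N),
          c (J.map (Fin.succEmb N)) • QB (x ∘ Fin.succ) J = 0 := by
        rw [Finset.mul_sum, ← hsum]
        exact Finset.sum_congr rfl fun J _ => by
          rw [QB_map_of_ne hw, mul_smul_comm]
      have hmul := (mul_eq_zero.1 hsum').resolve_left (lin_ne_zero hw)
      have hc' := ih (x ∘ Fin.succ) (fun J => c (J.map (Fin.succEmb N)))
        (fun J hJ => hsupp _ (fun hind => hJ (isIndep_of_map hind))) hmul
      intro I
      by_cases h0 : (0 : Fin (N+1)) ∈ I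
      · exact hzero I h0
      · rw [← map_preimage_succ h0]
        exact hc' _

/-- CORE 1: linear independence. -/
lemma core_indep (n N : ℕ) (x : Fin N → Fin n → ℝ)
    (hx0 : ∀ i, x i ≠ 0) (hx : Submodule.span ℝ (Set.range x) = ⊤)
    (I' : Set (Finset (Fin N))) (hI' : SemiExternal x I') :
    LinearIndependent ℂ (fun I : {I // I ∈ I'} => QB x I.1) := by
  classical
  haveI : Fintype {I // I ∈ I'} := (Set.toFinite I').fintype
  rw [Fintype.linearIndependent_iff]
  intro g hg
  set c : Finset (Fin N) → ℂ := fun I => if h : I ∈ I' then g ⟨I, h⟩ else 0 with hc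
  have hsupp : ∀ I, ¬ IsIndepSet x I → c I = 0 := by
    intro I hind
    rw [hc]
    by_cases h : I ∈ I'
    · exact absurd (hI'.1 I h) hind
    · simp [h]
  have hzero_off : ∀ I ∈ Finset.univ,
      I ∉ Finset.univ.filter (fun I : Finset (Fin N) => I ∈ I') → c I • QB x I = 0 := by
    intro I _ hI
    rw [Finset.mem_filter] at hI
    push_neg at hI
    have : I ∉ I' := fun h => hI (Finset.mem_univ I) h
    rw [hc]
    simp [this]
  have hsum : ∑ I : Finset (Fin N), c I • QB x I = 0 := by
    rw [← Finset.sum_subset (Finset.filter_subset _ _) hzero_off]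
    rw [Finset.sum_subtype (p := fun I => I ∈ I') _ (fun I => by simp) (fun I => c I • QB x I)]
    rw [← hg]
    exact Finset.sum_congr rfl fun i _ => by rw [hc]; simp [i.2]
  have := master_indep N x c hsupp hsum
  intro i
  have h2 := this i.1
  rw [hc] at h2
  simpa [i.2] using h2

-- ============ greedy bases ============

def grd {n N : ℕ} (x : Fin N → Fin n → ℝ) (Z : Finset (Fin N)) : Finset (Fin N) :=
  Z.filter (fun i => x i ∉ Submodule.span ℝ (x '' {j | j ∈ Z ∧ j < i}))

lemma mem_grd {n N : ℕ} {x : Fin N → Fin n → ℝ} {Z : Finset (Fin N)} {i : Fin N} :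
    i ∈ grd x Z ↔ i ∈ Z ∧ x i ∉ Submodule.span ℝ (x '' {j | j ∈ Z ∧ j < i}) :=
  Finset.mem_filter

lemma mem_span_of_not_grd {n N : ℕ} {x : Fin N → Fin n → ℝ} {Z : Finset (Fin N)} {i : Fin N}
    (hiZ : i ∈ Z) (hig : i ∉ grd x Z) :
    x i ∈ Submodule.span ℝ (x '' {j | j ∈ Z ∧ j < i}) := by
  by_contra h
  exact hig (mem_grd.2 ⟨hiZ, h⟩)

lemma grd_span_lt {n N : ℕ} (x : Fin N → Fin n → ℝ) (Z : Finset (Fin N)) :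
    ∀ i : Fin N, Submodule.span ℝ (x '' {j | j ∈ Z ∧ j < i})
      ≤ Submodule.span ℝ (x '' {j | j ∈ grd x Z ∧ j < i}) := by
  have key : ∀ (m : ℕ) (i : Fin N), i.val = m →
      Submodule.span ℝ (x '' {j | j ∈ Z ∧ j < i})
        ≤ Submodule.span ℝ (x '' {j | j ∈ grd x Z ∧ j < i}) := by
    intro m
    induction m using Nat.strong_induction_on with
    | _ m ihm =>
      intro i him
      apply Submodule.span_le.2
      rintro v ⟨j, ⟨hjZ, hji⟩, rfl⟩
      by_cases hjg : j ∈ grd x Z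
      · exact Submodule.subset_span ⟨j, ⟨hjg, hji⟩, rfl⟩
      · have hj2 := mem_span_of_not_grd hjZ hjg
        have hlt : j.val < m := him ▸ hji
        have h3 := ihm j.val hlt j rfl hj2
        refine Submodule.span_mono ?_ h3
        apply Set.image_mono
        rintro k ⟨hk1, hk2⟩
        exact ⟨hk1, lt_trans hk2 hji⟩
  exact fun i => key i.val i rfl

lemma indep_of_filtration {n N : ℕ} (x : Fin N → Fin n → ℝ) (S : Finset (Fin N))
    (h : ∀ i ∈ S, x i ∉ Submodule.span ℝ (x '' {j | j ∈ S ∧ j < i})) : IsIndepSet x S := by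
  classical
  rw [IsIndepSet, Fintype.linearIndependent_iff]
  intro g hg
  by_contra hcon
  push_neg at hcon
  obtain ⟨i₁, hi₁⟩ := hcon
  set T : Finset {i // i ∈ S} := Finset.univ.filter (fun i => g i ≠ 0) with hT
  have hTne : T.Nonempty := ⟨i₁, by simp [hT, hi₁]⟩
  set i₀ := T.max' hTne with hi₀
  have hi₀T : i₀ ∈ T := T.max'_mem hTne
  have hgi₀ : g i₀ ≠ 0 := (Finset.mem_filter.1 hi₀T).2
  have hiso : g i₀ • x i₀.1 + ∑ i ∈ Finset.univ.erase i₀, g i • x i.1 = 0 := by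
    have h2 := Finset.add_sum_erase Finset.univ (fun i : {i // i ∈ S} => g i • x i.1)
      (Finset.mem_univ i₀)
    rw [hg] at h2
    exact h2
  have hx : x i₀.1 = (-(g i₀)⁻¹) • ∑ i ∈ Finset.univ.erase i₀, g i • x i.1 := by
    have h2 : g i₀ • x i₀.1 = -∑ i ∈ Finset.univ.erase i₀, g i • x i.1 := by
      rw [eq_neg_iff_add_eq_zero]; exact hiso
    rw [neg_smul, ← smul_neg, ← h2, ← smul_assoc, smul_eq_mul, inv_mul_cancel₀ hgi₀, one_smul]
  have hmem : x i₀.1 ∈ Submodule.span ℝ (x '' {j | j ∈ S ∧ j < i₀.1}) := by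
    rw [hx]
    apply Submodule.smul_mem
    apply Submodule.sum_mem
    intro i hi
    by_cases hgi : g i = 0
    · rw [hgi, zero_smul]; exact Submodule.zero_mem _
    · apply Submodule.smul_mem
      have hiT : i ∈ T := by simp [hT, hgi]
      have hile : i ≤ i₀ := T.le_max' i hiT
      have hine : i ≠ i₀ := (Finset.mem_erase.1 hi).1
      have hilt : i.1 < i₀.1 := by exact_mod_cast lt_of_le_of_ne hile hine
      exact Submodule.subset_span ⟨i.1, ⟨i.2, hilt⟩, rfl⟩
  exact h i₀.1 i₀.2 hmem

lemma grd_indep {n N : ℕ} (x : Fin N → Fin n → ℝ) (Z : Finset (Fin N)) :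
    IsIndepSet x (grd x Z) := by
  apply indep_of_filtration
  intro i hi
  have h2 := (mem_grd.1 hi).2
  intro hc
  apply h2
  refine Submodule.span_mono ?_ hc
  apply Set.image_mono
  rintro k ⟨hk1, hk2⟩
  exact ⟨(mem_grd.1 hk1).1, hk2⟩

lemma span_le_grd {n N : ℕ} (x : Fin N → Fin n → ℝ) (Z : Finset (Fin N)) :
    Submodule.span ℝ (x '' ↑Z) ≤ Submodule.span ℝ (x '' ↑(grd x Z)) := by
  apply Submodule.span_le.2
  rintro v ⟨z, hz, rfl⟩
  rw [Finset.mem_coe] at hz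
  by_cases hzg : z ∈ grd x Z
  · exact Submodule.subset_span ⟨z, hzg, rfl⟩
  · have h2 := grd_span_lt x Z z (mem_span_of_not_grd hz hzg)
    refine Submodule.span_mono ?_ h2
    rintro v ⟨k, ⟨hk1, _⟩, rfl⟩
    exact ⟨k, hk1, rfl⟩

-- ============ the key spanning lemma ============

lemma key_span {n N : ℕ} (x : Fin N → Fin n → ℝ) (Y : Finset (Fin N)) :
    pProd x Y ∈ Submodule.span ℂ
      {q | ∃ J : Finset (Fin N), IsIndepSet x J ∧
        Submodule.span ℝ (x '' ↑(Finset.univ \ Y)) ≤ Submodule.span ℝ (x '' ↑J) ∧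
        q = QB x J} := by
  classical
  have main : ∀ (m : ℕ) (Y : Finset (Fin N)), (∑ i ∈ Y, i.val) = m →
      pProd x Y ∈ Submodule.span ℂ
        {q | ∃ J : Finset (Fin N), IsIndepSet x J ∧
          Submodule.span ℝ (x '' ↑(Finset.univ \ Y)) ≤ Submodule.span ℝ (x '' ↑J) ∧
          q = QB x J} := by
    intro m
    induction m using Nat.strong_induction_on with
    | _ m ihm =>
      intro Y hm
      set Z : Finset (Fin N) := Finset.univ \ Y with hZ
      have hZY : ∀ i, i ∈ Z ↔ i ∉ Y := by
        intro i; rw [hZ, Finset.mem_sdiff]; simp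
      set G : Finset (Fin N) := grd x Z with hG
      have hGZ : ∀ i, i ∈ G → i ∈ Z := fun i hi => (mem_grd.1 hi).1
      by_cases hcase : ∀ i ∈ Y, x i ∉ Submodule.span ℝ (x '' {j | j ∈ G ∧ j < i})
      · -- base case : Y = XofY x G
        have hXG : XofY x G = Y := by
          ext i
          rw [mem_XofY]
          constructor
          · rintro ⟨hiG, hspan⟩
            by_contra hiY
            have hiZ : i ∈ Z := (hZY i).2 hiY
            exact hspan (grd_span_lt x Z i (mem_span_of_not_grd hiZ hiG))
          · intro hiY
            refine ⟨fun hiG => (hZY i).1 (hGZ i hiG) hiY, hcase i hiY⟩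
        have hQ : pProd x Y = QB x G := by rw [QB, hXG]
        exact Submodule.subset_span ⟨G, grd_indep x Z, span_le_grd x Z, hQ⟩
      · -- inductive case : rewrite p_Y
        push_neg at hcase
        obtain ⟨i₀, hi₀Y, hi₀span⟩ := hcase
        set T : Finset (Fin N) := G.filter (· < i₀) with hTdef
        have hsetT : {j | j ∈ G ∧ j < i₀} = (↑T : Set (Fin N)) := by
          ext j; simp [hTdef]
        rw [hsetT, Set.image_eq_range, Submodule.mem_span_range_iff_exists_fun ℝ] at hi₀span
        obtain ⟨α, hα⟩ := hi₀span
        have hbZ : ∀ b : {b // b ∈ (↑T : Set (Fin N))}, b.1 ∈ Z :=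
          fun b => hGZ b.1 (Finset.mem_filter.1 b.2).1
        have hblt : ∀ b : {b // b ∈ (↑T : Set (Fin N))}, b.1 < i₀ :=
          fun b => (Finset.mem_filter.1 b.2).2
        have hbY : ∀ b : {b // b ∈ (↑T : Set (Fin N))}, b.1 ∉ Y :=
          fun b => (hZY b.1).1 (hbZ b)
        have hbE : ∀ b : {b // b ∈ (↑T : Set (Fin N))}, b.1 ∉ Y.erase i₀ :=
          fun b hb => (hbY b) (Finset.mem_of_mem_erase hb)
        have hexp : pProd x Y = ∑ b : {b // b ∈ (↑T : Set (Fin N))},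
            (α b : ℂ) • pProd x (insert b.1 (Y.erase i₀)) := by
          rw [pProd_erase_mul x hi₀Y, ← hα, lin_sum_smul, Finset.sum_mul]
          refine Finset.sum_congr rfl fun b _ => ?_
          rw [pProd_insert x (hbE b), smul_mul_assoc]
        rw [hexp]
        apply Submodule.sum_mem
        intro b _
        by_cases hαb : α b = 0
        · rw [hαb]
          simp
        · apply Submodule.smul_mem
          set Y' : Finset (Fin N) := insert b.1 (Y.erase i₀) with hY'
          have hbne : b.1 ≠ i₀ := ne_of_lt (hblt b)
          have hsY : i₀.val + ∑ i ∈ Y.erase i₀, i.val = ∑ i ∈ Y, i.val :=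
            Finset.add_sum_erase _ _ hi₀Y
          have hsY' : ∑ i ∈ Y', i.val = b.1.val + ∑ i ∈ Y.erase i₀, i.val := by
            rw [hY', Finset.sum_insert (hbE b)]
          have hlt : ∑ i ∈ Y', i.val < m := by
            have hbo : b.1.val < i₀.val := hblt b
            omega
          have hIH := ihm (∑ i ∈ Y', i.val) hlt Y' rfl
          -- monotonicity
          have hZle : Submodule.span ℝ (x '' ↑(Finset.univ \ Y))
              ≤ Submodule.span ℝ (x '' ↑(Finset.univ \ Y')) := by
            apply Submodule.span_le.2
            rintro v ⟨z, hz, rfl⟩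
            rw [Finset.mem_coe, Finset.mem_sdiff] at hz
            have hzY : z ∉ Y := hz.2
            by_cases hzb : z = b.1
            · -- solve for x b from the equation hα
              subst hzb
              have hiso : α b • x b.1 + ∑ b' ∈ Finset.univ.erase b, α b' • x b'.1 = x i₀ := by
                have h2 := Finset.add_sum_erase Finset.univ
                  (fun b' : {b // b ∈ (↑T : Set (Fin N))} => α b' • x b'.1) (Finset.mem_univ b)
                rw [hα] at h2
                exact h2
              have hxb : x b.1 = (α b)⁻¹ •
                  (x i₀ - ∑ b' ∈ Finset.univ.erase b, α b' • x b'.1) := by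
                rw [eq_comm, inv_smul_eq_iff₀ hαb, ← hiso]
                abel
              rw [hxb]
              apply Submodule.smul_mem
              apply Submodule.sub_mem
              · apply Submodule.subset_span
                refine ⟨i₀, ?_, rfl⟩
                rw [Finset.mem_coe, Finset.mem_sdiff]
                refine ⟨Finset.mem_univ _, ?_⟩
                rw [hY', Finset.mem_insert]
                rintro (h | h)
                · exact hbne h.symm
                · exact (Finset.mem_erase.1 h).1 rfl
              · apply Submodule.sum_mem
                intro b' hb'
                apply Submodule.smul_mem
                apply Submodule.subset_span
                refine ⟨b'.1, ?_, rfl⟩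
                rw [Finset.mem_coe, Finset.mem_sdiff]
                refine ⟨Finset.mem_univ _, ?_⟩
                rw [hY', Finset.mem_insert]
                have hb'b : b'.1 ≠ b.1 := by
                  intro hc
                  exact (Finset.mem_erase.1 hb').1 (Subtype.ext hc)
                rintro (h | h)
                · exact hb'b h
                · exact hbY b' (Finset.mem_of_mem_erase h)
            · apply Submodule.subset_span
              refine ⟨z, ?_, rfl⟩
              rw [Finset.mem_coe, Finset.mem_sdiff]
              refine ⟨Finset.mem_univ _, ?_⟩
              rw [hY', Finset.mem_insert]
              rintro (h | h)
              · exact hzb h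
              · exact hzY (Finset.mem_of_mem_erase h)
          refine Submodule.span_mono ?_ hIH
          rintro q ⟨J, hJ1, hJ2, hJ3⟩
          exact ⟨J, hJ1, le_trans hZle hJ2, hJ3⟩
  exact main _ Y rfl

/-- CORE 2: spanning. -/
lemma core_span (n N : ℕ) (x : Fin N → Fin n → ℝ)
    (hx0 : ∀ i, x i ≠ 0) (hx : Submodule.span ℝ (Set.range x) = ⊤)
    (I' : Set (Finset (Fin N))) (hI' : SemiExternal x I') :
    Submodule.span ℂ (Set.range fun I : {I // I ∈ I'} => QB x I.1) = PplusOn x I' := by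
  classical
  apply le_antisymm
  · apply Submodule.span_le.2
    rintro q ⟨i, rfl⟩
    apply Submodule.subset_span
    refine ⟨XofY x i.1, ⟨i.1, i.2, ?_⟩, rfl⟩
    ext k
    simp only [Finset.mem_inter, Finset.notMem_empty, iff_false]
    rintro ⟨hk1, hk2⟩
    exact (mem_XofY.1 hk1).1 hk2
  · apply Submodule.span_le.2
    rintro q ⟨Y, ⟨I₀, hI₀, hYI₀⟩, rfl⟩
    have hI₀Z : Submodule.span ℝ (x '' ↑I₀) ≤ Submodule.span ℝ (x '' ↑(Finset.univ \ Y)) := by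
      apply Submodule.span_mono
      apply Set.image_mono
      intro k hk
      rw [Finset.mem_coe, Finset.mem_sdiff]
      refine ⟨Finset.mem_univ _, fun hkY => ?_⟩
      have : k ∈ Y ∩ I₀ := Finset.mem_inter.2 ⟨hkY, hk⟩
      rw [hYI₀] at this
      exact Finset.notMem_empty k this
    refine Submodule.span_le.2 ?_ (key_span x Y)
    rintro p ⟨J, hJind, hJspan, rfl⟩
    have hJI' : J ∈ I' := hI'.2 I₀ hI₀ J hJind (le_trans hI₀Z hJspan)
    exact Submodule.subset_span ⟨⟨J, hJI'⟩, rfl⟩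

-- ===== auxiliary lemmas =====

lemma lin_isHomogeneous (n : ℕ) (v : Fin n → ℝ) : (lin n v).IsHomogeneous 1 := by
  apply MvPolynomial.IsHomogeneous.sum
  intro i _
  simpa using (MvPolynomial.isHomogeneous_C (Fin n) ((v i : ℂ))).mul
    (MvPolynomial.isHomogeneous_X ℂ i)

lemma pProd_isHomogeneous {n : ℕ} {ι : Type*} (x : ι → Fin n → ℝ) (Y : Finset ι) :
    (pProd x Y).IsHomogeneous Y.card := by
  have := MvPolynomial.IsHomogeneous.prod Y (fun i => lin n (x i)) (fun _ => 1)
    (fun i _ => lin_isHomogeneous n (x i))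
  simpa [pProd] using this

lemma QB_isHomogeneous {n N : ℕ} (x : Fin N → Fin n → ℝ) (Y : Finset (Fin N)) :
    (QB x Y).IsHomogeneous (valu x Y) :=
  pProd_isHomogeneous x (XofY x Y)

lemma QB_mem_homSub {n N : ℕ} (x : Fin N → Fin n → ℝ) (Y : Finset (Fin N)) :
    QB x Y ∈ MvPolynomial.homogeneousSubmodule (Fin n) ℂ (valu x Y) :=
  (MvPolynomial.mem_homogeneousSubmodule _ _).2 (QB_isHomogeneous x Y)

/-- span ⊓ homogeneous component, for spans of homogeneous families -/
lemma span_inf_homSub {n : ℕ} {ι : Type*} [Fintype ι] (f : ι → MvPolynomial (Fin n) ℂ)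
    (d : ι → ℕ) (hf : ∀ i, f i ∈ MvPolynomial.homogeneousSubmodule (Fin n) ℂ (d i)) (j : ℕ) :
    Submodule.span ℂ (Set.range f) ⊓ MvPolynomial.homogeneousSubmodule (Fin n) ℂ j
      = Submodule.span ℂ (Set.range fun i : {i : ι // d i = j} => f i.1) := by
  apply le_antisymm
  · intro p hp
    obtain ⟨hp1, hp2⟩ := Submodule.mem_inf.1 hp
    obtain ⟨c, hc⟩ := (Submodule.mem_span_range_iff_exists_fun ℂ).1 hp1
    have hcomp : MvPolynomial.homogeneousComponent j p = p :=
      (MvPolynomial.homogeneousComponent_of_mem hp2).trans (if_pos rfl)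
    have : p = ∑ i : ι, (if d i = j then c i • f i else 0) := by
      rw [← hcomp, ← hc, map_sum]
      refine Finset.sum_congr rfl fun i _ => ?_
      rw [LinearMap.map_smul, MvPolynomial.homogeneousComponent_of_mem (hf i)]
      by_cases h : d i = j
      · simp [h]
      · simp [h, Ne.symm h]
    rw [this]
    apply Submodule.sum_mem
    intro i _
    by_cases h : d i = j
    · simp only [if_pos h]
      exact Submodule.smul_mem _ _ (Submodule.subset_span ⟨⟨i, h⟩, rfl⟩)
    · simp [h]
  · rw [Submodule.span_le]
    rintro p ⟨⟨i, hi⟩, rfl⟩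
    exact ⟨Submodule.subset_span ⟨i, rfl⟩, hi ▸ hf i⟩

theorem semiexternal_QI_basis (n N : ℕ) (x : Fin N → Fin n → ℝ)
    (hx0 : ∀ i, x i ≠ 0) (hx : Submodule.span ℝ (Set.range x) = ⊤)
    (I' : Set (Finset (Fin N))) (hI' : SemiExternal x I') :
    LinearIndependent ℂ (fun I : {I // I ∈ I'} => QB x I.1) ∧
    Submodule.span ℂ (Set.range fun I : {I // I ∈ I'} => QB x I.1) = PplusOn x I' ∧
    Module.finrank ℂ (PplusOn x I') = I'.ncard ∧
    ∀ j : ℕ, Module.finrank ℂ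
        ↥(PplusOn x I' ⊓ MvPolynomial.homogeneousSubmodule (Fin n) ℂ j)
      = Set.ncard {I | I ∈ I' ∧ valu x I = j} := by
  have hfin : I'.Finite := Set.toFinite I'
  haveI : Fintype {I // I ∈ I'} := hfin.fintype
  have hindep := core_indep n N x hx0 hx I' hI'
  have hspan := core_span n N x hx0 hx I' hI'
  refine ⟨hindep, hspan, ?_, ?_⟩
  · rw [← hspan, finrank_span_eq_card hindep]
    rw [← Nat.card_coe_set_eq, Nat.card_eq_fintype_card]
  · intro j
    have key := span_inf_homSub (fun I : {I // I ∈ I'} => QB x I.1)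
      (fun I => valu x I.1) (fun I => QB_mem_homSub x I.1) j
    rw [← hspan, key]
    haveI : Fintype {i : {I // I ∈ I'} // valu x i.1 = j} := Subtype.fintype _
    have hsub : LinearIndependent ℂ
        (fun i : {i : {I // I ∈ I'} // valu x i.1 = j} => QB x i.1.1) := by
      have := hindep.comp (fun i : {i : {I // I ∈ I'} // valu x i.1 = j} => i.1)
        Subtype.val_injective
      exact this
    rw [finrank_span_eq_card hsub]
    have e : {i : {I // I ∈ I'} // valu x i.1 = j} ≃ {I | I ∈ I' ∧ valu x I = j} :=
      { toFun := fun i => ⟨i.1.1, i.1.2, i.2⟩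
        invFun := fun I => ⟨⟨I.1, I.2.1⟩, I.2.2⟩
        left_inv := fun i => rfl
        right_inv := fun I => rfl }
    rw [← Nat.card_coe_set_eq, Nat.card_eq_fintype_card, Fintype.card_congr e.symm]
end
end

section
/- If B ∈ 𝔹(X) is not I-internal, then Q_B = p_{X(B)} lies in the ideal J_-(X,I); equivalently, the set X(B) is I-long. -/
open MvPolynomial

attribute [local instance] Classical.propDecidable

noncomputable section

theorem not_internal_QB_long (n N : ℕ) (x : Fin N → Fin n → ℝ)
    (hx0 : ∀ i, x i ≠ 0) (hx : Submodule.span ℝ (Set.range x) = ⊤)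
    (Iset : Finset (Fin N)) (hI : IsIndepSet x Iset)
    (hord : ∀ i ∈ Iset, ∀ j ∉ Iset, j < i)
    (B : Finset (Fin N)) (hB : IsBasisSet x B) (hnot : ¬ IInternal x Iset B) :
    QB x B ∈ JminusOn x Iset ∧
    ∀ B' : Finset (Fin N), IInternal x Iset B' → ((XofY x B) ∩ B').Nonempty := by
  -- extract an I-active element b of B
  have hact : ∃ b, IActive x Iset B b := by
    by_contra h
    push_neg at h
    exact hnot ⟨hB, h⟩
  obtain ⟨b, hbB, hbI, hbmax⟩ := hact
  set F : Submodule ℝ (Fin n → ℝ) := Submodule.span ℝ (x '' ↑(B.erase b)) with hFdef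
  -- x b ∉ F, by linear independence of B
  have hxbF : x b ∉ F := by
    have hli := hB.1
    have h1 : x b ∉ Submodule.span ℝ
        ((fun i : {i // i ∈ B} => x i.1) '' {i | i.1 ≠ b}) := by
      have := hli.notMem_span_image (s := {i | i.1 ≠ b}) (x := ⟨b, hbB⟩) (by simp)
      simpa using this
    have hset : x '' ↑(B.erase b) =
        (fun i : {i // i ∈ B} => x i.1) '' {i | i.1 ≠ b} := by
      ext v
      constructor
      · rintro ⟨w, hw, rfl⟩
        simp only [Finset.coe_erase, Set.mem_diff, Set.mem_singleton_iff] at hw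
        exact ⟨⟨w, hw.1⟩, hw.2, rfl⟩
      · rintro ⟨⟨w, hwB⟩, hw, rfl⟩
        exact ⟨w, by simpa using ⟨hwB, hw⟩, rfl⟩
    rw [hFdef, hset]
    exact h1
  -- the key claim
  have key : ∀ B' : Finset (Fin N), IInternal x Iset B' → ((XofY x B) ∩ B').Nonempty := by
    intro B' hB'
    -- B' has an element outside F
    have hFne : ∃ i ∈ B', x i ∉ F := by
      by_contra h
      push_neg at h
      have hle : Submodule.span ℝ (x '' ↑B') ≤ F := by
        apply Submodule.span_le.mpr
        rintro v ⟨w, hw, rfl⟩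
        exact h w hw
      rw [hB'.1.2] at hle
      exact hxbF (hle Submodule.mem_top)
    by_cases hcase : ∃ i ∈ B', x i ∉ F ∧ i ≠ b
    · obtain ⟨i, hiB', hiF, hib⟩ := hcase
      have hiltb : i < b := lt_of_le_of_ne (hbmax i hiF) hib
      have hiX : i ∈ XofY x B := by
        simp only [XofY, Finset.mem_filter, Finset.mem_univ, true_and]
        constructor
        · intro hiB
          exact hiF (Submodule.subset_span ⟨i, by simp [Finset.mem_erase, hib, hiB], rfl⟩)
        · intro hsp
          apply hiF
          have hle : Submodule.span ℝ (x '' {j | j ∈ B ∧ j < i}) ≤ F := by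
            apply Submodule.span_le.mpr
            rintro v ⟨w, ⟨hwB, hwi⟩, rfl⟩
            exact Submodule.subset_span
              ⟨w, by simp [Finset.mem_erase, hwB, (hwi.trans hiltb).ne], rfl⟩
          exact hle hsp
      exact ⟨i, Finset.mem_inter.mpr ⟨hiX, hiB'⟩⟩
    · -- only b lies outside F; then b is I-active in B', contradiction
      exfalso
      push_neg at hcase
      obtain ⟨i, hiB', hiF⟩ := hFne
      have hib : i = b := hcase i hiB' hiF
      subst hib
      set W : Submodule ℝ (Fin n → ℝ) := Submodule.span ℝ (x '' ↑(B'.erase i)) with hWdef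
      have hWF : W ≤ F := by
        apply Submodule.span_le.mpr
        rintro v ⟨w, hw, rfl⟩
        simp only [Finset.coe_erase, Set.mem_diff, Set.mem_singleton_iff] at hw
        by_contra hvF
        exact hw.2 (hcase w hw.1 hvF)
      have htop : (⊤ : Submodule ℝ (Fin n → ℝ)) ≤ W ⊔ Submodule.span ℝ {x i} := by
        rw [← hB'.1.2]
        apply Submodule.span_le.mpr
        rintro v ⟨w, hw, rfl⟩
        by_cases hwb : w = i
        · subst hwb
          exact Submodule.mem_sup_right (Submodule.mem_span_singleton_self _)
        · exact Submodule.mem_sup_left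
            (Submodule.subset_span ⟨w, by simp [Finset.mem_erase, hwb, hw], rfl⟩)
      have hFW : F ≤ W := by
        intro v hv
        have hv2 : v ∈ W ⊔ Submodule.span ℝ {x i} := htop Submodule.mem_top
        obtain ⟨y, hy, z, hz, hyz⟩ := Submodule.mem_sup.mp hv2
        obtain ⟨r, rfl⟩ := Submodule.mem_span_singleton.mp hz
        have hr : r = 0 := by
          by_contra hr
          have : r • x i = v - y := by rw [← hyz]; abel
          have hmem : r • x i ∈ F := by
            rw [this]; exact Submodule.sub_mem _ hv (hWF hy)
          have : x i ∈ F := by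
            have := Submodule.smul_mem F r⁻¹ hmem
            rwa [smul_smul, inv_mul_cancel₀ hr, one_smul] at this
          exact hiF this
        rw [hr, zero_smul, add_zero] at hyz
        rwa [← hyz]
      have hactive : IActive x Iset B' i := by
        refine ⟨hiB', hbI, fun j hj => ?_⟩
        apply hbmax
        intro hjF
        exact hj (hFW hjF)
      exact hB'.2 i hactive
  refine ⟨?_, key⟩
  exact Ideal.subset_span ⟨XofY x B, key, rfl⟩
end
end
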